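/- arXiv:2209.01609 — 11 statements merged into one kernel-verified Lean document; each statement's English description precedes it below -/
import Mathlib

section
/- Let n ≥ 2 and m be integers with 0 < m < n and gcd(m, n) = 1, and let ρ₁ : ℝ → ℝ be a continuous 2π-periodic function. If there exists k ∈ ℤ with k ≠ 0, n ∣ k, and the k-th Fourier coefficient of ρ₁ nonzero, then the function θ ↦ ∑_{j=0}^{n-1} ρ₁(θ + 2πmj/n) is not constant on ℝ. -/
/-- The `k`-th Fourier coefficient (with respect to period `2π`) of a function
`g : ℝ → ℂ`, namely `(1/2π) ∫_0^{2π} g(θ) e^{-ikθ} dθ`. -/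
noncomputable def fourierCoeff2pi (g : ℝ → ℂ) (k : ℤ) : ℂ :=
  (1 / (2 * (Real.pi : ℂ))) *
    ∫ θ in (0 : ℝ)..(2 * Real.pi), g θ * Complex.exp (-Complex.I * (k : ℂ) * (θ : ℂ))

/-- If `ρ₁` is continuous and `2π`-periodic and has a nonzero Fourier coefficient at some
nonzero frequency `k` divisible by `n`, then the subharmonic average
`θ ↦ ∑_{j=0}^{n-1} ρ₁(θ + 2πmj/n)` is not constant. -/
theorem subharmonic_average_not_constant (n : ℕ) (hn : 2 ≤ n) (m : ℤ)
    (hm : 0 < m) (hmn : m < (n : ℤ)) (hgcd : Int.gcd m (n : ℤ) = 1)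
    (ρ₁ : ℝ → ℝ) (hc : Continuous ρ₁) (hper : Function.Periodic ρ₁ (2 * Real.pi))
    (h : ∃ k : ℤ, k ≠ 0 ∧ (n : ℤ) ∣ k ∧
      fourierCoeff2pi (fun θ => ((ρ₁ θ : ℝ) : ℂ)) k ≠ 0) :
    ¬ ∃ c : ℝ, ∀ θ : ℝ,
        ∑ j ∈ Finset.range n, ρ₁ (θ + 2 * Real.pi * m * j / n) = c := by
  rintro ⟨c, hconst⟩
  obtain ⟨k, hk0, ⟨d, hd⟩, hkc⟩ := h
  have hn0 : (n : ℝ) ≠ 0 := by positivity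
  have hnC : (n : ℂ) ≠ 0 := by exact_mod_cast (by positivity : (n:ℝ) ≠ 0)
  set f : ℝ → ℂ := fun θ => (ρ₁ θ : ℂ) * Complex.exp (-Complex.I * (k : ℂ) * (θ : ℂ)) with hf
  have hfc : Continuous f := by
    apply Continuous.mul
    · exact Complex.continuous_ofReal.comp hc
    · exact Complex.continuous_exp.comp (by continuity)
  have hexp1 : Complex.exp (-Complex.I * (k : ℂ) * ((2 : ℂ) * Real.pi)) = 1 := by
    have := Complex.exp_int_mul_two_pi_mul_I (-k)
    rw [← this]
    congr 1
    push_cast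
    ring
  have hfper : Function.Periodic f (2 * Real.pi) := by
    intro x
    simp only [hf]
    rw [hper x]
    congr 1
    push_cast
    rw [mul_add, Complex.exp_add, hexp1, mul_one]
  -- translated integral
  have key : ∀ a : ℝ,
      (∫ θ in (0:ℝ)..(2*Real.pi), ((ρ₁ (θ + a) : ℂ)) * Complex.exp (-Complex.I * (k:ℂ) * (θ:ℂ)))
      = Complex.exp (Complex.I * (k:ℂ) * (a:ℂ)) * ∫ θ in (0:ℝ)..(2*Real.pi), f θ := by
    intro a
    have h1 : ∀ θ : ℝ, ((ρ₁ (θ + a) : ℂ)) * Complex.exp (-Complex.I * (k:ℂ) * (θ:ℂ))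
        = Complex.exp (Complex.I * (k:ℂ) * (a:ℂ)) * f (θ + a) := by
      intro θ
      simp only [hf]
      have he : Complex.exp (Complex.I*(k:ℂ)*(a:ℂ)) * Complex.exp (-Complex.I*(k:ℂ)*((θ+a:ℝ):ℂ))
          = Complex.exp (-Complex.I*(k:ℂ)*(θ:ℂ)) := by
        rw [← Complex.exp_add]; congr 1; push_cast; ring
      rw [← he]; ring
    calc (∫ θ in (0:ℝ)..(2*Real.pi), ((ρ₁ (θ + a) : ℂ)) * Complex.exp (-Complex.I * (k:ℂ) * (θ:ℂ)))
        = ∫ θ in (0:ℝ)..(2*Real.pi), Complex.exp (Complex.I * (k:ℂ) * (a:ℂ)) * f (θ + a) := by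
          simp_rw [h1]
      _ = Complex.exp (Complex.I * (k:ℂ) * (a:ℂ)) * ∫ θ in (0:ℝ)..(2*Real.pi), f (θ + a) :=
          intervalIntegral.integral_const_mul _ _
      _ = Complex.exp (Complex.I * (k:ℂ) * (a:ℂ)) * ∫ θ in a..(2*Real.pi + a), f θ := by
          rw [intervalIntegral.integral_comp_add_right, zero_add]
      _ = Complex.exp (Complex.I * (k:ℂ) * (a:ℂ)) * ∫ θ in (0:ℝ)..(2*Real.pi), f θ := by
          congr 1
          have := hfper.intervalIntegral_add_eq a 0
          simpa [add_comm] using this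
  -- phase is 1 at a_j
  have phase : ∀ j : ℕ, Complex.exp (Complex.I * (k:ℂ) * ((2 * Real.pi * m * j / n : ℝ):ℂ)) = 1 := by
    intro j
    have := Complex.exp_int_mul_two_pi_mul_I (d * m * j)
    rw [← this]
    congr 1
    push_cast [hd]
    field_simp
  -- interchange sum and integral
  have hIntg : ∀ j ∈ Finset.range n, IntervalIntegrable
      (fun θ : ℝ => ((ρ₁ (θ + 2 * Real.pi * m * j / n) : ℂ)) * Complex.exp (-Complex.I * (k:ℂ) * (θ:ℂ)))
      MeasureTheory.volume 0 (2*Real.pi) := by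
    intro j _
    apply Continuous.intervalIntegrable
    apply Continuous.mul
    · exact Complex.continuous_ofReal.comp (hc.comp (by continuity))
    · exact Complex.continuous_exp.comp (by continuity)
  have hsum : (∫ θ in (0:ℝ)..(2*Real.pi),
      ∑ j ∈ Finset.range n, ((ρ₁ (θ + 2 * Real.pi * m * j / n) : ℂ)) * Complex.exp (-Complex.I * (k:ℂ) * (θ:ℂ)))
      = ∑ j ∈ Finset.range n, ∫ θ in (0:ℝ)..(2*Real.pi),
          ((ρ₁ (θ + 2 * Real.pi * m * j / n) : ℂ)) * Complex.exp (-Complex.I * (k:ℂ) * (θ:ℂ)) :=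
    intervalIntegral.integral_finset_sum hIntg
  -- RHS = n * ∫ f
  have hrhs : (∑ j ∈ Finset.range n, ∫ θ in (0:ℝ)..(2*Real.pi),
      ((ρ₁ (θ + 2 * Real.pi * m * j / n) : ℂ)) * Complex.exp (-Complex.I * (k:ℂ) * (θ:ℂ)))
      = (n : ℂ) * ∫ θ in (0:ℝ)..(2*Real.pi), f θ := by
    have heach : ∀ j ∈ Finset.range n, (∫ θ in (0:ℝ)..(2*Real.pi),
        ((ρ₁ (θ + 2 * Real.pi * m * j / n) : ℂ)) * Complex.exp (-Complex.I * (k:ℂ) * (θ:ℂ)))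
        = ∫ θ in (0:ℝ)..(2*Real.pi), f θ := by
      intro j _
      rw [key (2 * Real.pi * m * j / n), phase j, one_mul]
    rw [Finset.sum_congr rfl heach]
    simp [Finset.sum_const, nsmul_eq_mul]
  -- LHS = 0
  have hcI : (-Complex.I * (k:ℂ)) ≠ 0 := by
    apply mul_ne_zero
    · simpa using Complex.I_ne_zero
    · exact_mod_cast hk0
  have hexp0 : (∫ θ in (0:ℝ)..(2*Real.pi), Complex.exp (-Complex.I * (k:ℂ) * (θ:ℂ))) = 0 := by
    rw [integral_exp_mul_complex hcI]
    push_cast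
    rw [hexp1]
    simp
  have hlhs : (∫ θ in (0:ℝ)..(2*Real.pi),
      ∑ j ∈ Finset.range n, ((ρ₁ (θ + 2 * Real.pi * m * j / n) : ℂ)) * Complex.exp (-Complex.I * (k:ℂ) * (θ:ℂ)))
      = 0 := by
    have heq : ∀ θ : ℝ, (∑ j ∈ Finset.range n, ((ρ₁ (θ + 2 * Real.pi * m * j / n) : ℂ)) * Complex.exp (-Complex.I * (k:ℂ) * (θ:ℂ)))
        = (c : ℂ) * Complex.exp (-Complex.I * (k:ℂ) * (θ:ℂ)) := by
      intro θ
      rw [← Finset.sum_mul]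
      congr 1
      exact_mod_cast congrArg (Complex.ofReal) (hconst θ)
    simp_rw [heq]
    rw [intervalIntegral.integral_const_mul, hexp0, mul_zero]
  have hf0 : (∫ θ in (0:ℝ)..(2*Real.pi), f θ) = 0 := by
    have : (n : ℂ) * ∫ θ in (0:ℝ)..(2*Real.pi), f θ = 0 := by rw [← hrhs, ← hsum, hlhs]
    exact (mul_eq_zero.mp this).resolve_left hnC
  apply hkc
  unfold fourierCoeff2pi
  simp only [hf] at hf0
  rw [hf0] at *
  simp [hf0]
end

section
/- Let ρ₀ ∈ (0, π/2), a, b ∈ ℝ, and Δ ∈ ℝ with sin(Δ/2) ≠ 0. Define D : ℝ → ℝ by D(ε) = arccos( sin(ρ₀+εa)·sin(ρ₀+εb)·cos Δ + cos(ρ₀+εa)·cos(ρ₀+εb) ). Then D is differentiable at ε = 0 with derivative D′(0) = sin(2ρ₀)·(a+b)·sin²(Δ/2) / sin l₀, where l₀ = arccos(1 − 2 sin²ρ₀ sin²(Δ/2)). -/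
open Real

/-- **First-order variation of spherical chord length.** For `ρ₀ ∈ (0, π/2)`, `a, b ∈ ℝ`
and `Δ` with `sin(Δ/2) ≠ 0`, the function
`D(ε) = arccos(sin(ρ₀+εa) sin(ρ₀+εb) cos Δ + cos(ρ₀+εa) cos(ρ₀+εb))`
is differentiable at `ε = 0` with derivative
`sin(2ρ₀)(a+b)sin²(Δ/2)/sin l₀`, where `l₀ = arccos(1 − 2 sin²ρ₀ sin²(Δ/2))`. -/
theorem spherical_chord_variation (ρ₀ : ℝ) (hρ : ρ₀ ∈ Set.Ioo 0 (π / 2))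
    (a b Δ : ℝ) (hΔ : sin (Δ / 2) ≠ 0) :
    HasDerivAt
      (fun ε : ℝ => arccos (sin (ρ₀ + ε * a) * sin (ρ₀ + ε * b) * cos Δ +
        cos (ρ₀ + ε * a) * cos (ρ₀ + ε * b)))
      (sin (2 * ρ₀) * (a + b) * sin (Δ / 2) ^ 2 /
        sin (arccos (1 - 2 * sin ρ₀ ^ 2 * sin (Δ / 2) ^ 2)))
      0 := by
  obtain ⟨h0, h1⟩ := hρ
  set s : ℝ := sin ρ₀ ^ 2 * sin (Δ / 2) ^ 2 with hs
  have hsinρ : 0 < sin ρ₀ := Real.sin_pos_of_pos_of_lt_pi h0 (h1.trans (by linarith [pi_pos]))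
  have hcosρ : 0 < cos ρ₀ := Real.cos_pos_of_mem_Ioo ⟨by linarith [pi_pos], h1⟩
  have hs0 : 0 < s := by positivity
  have hsin1 : sin ρ₀ ^ 2 < 1 := by
    have := Real.sin_sq_add_cos_sq ρ₀
    nlinarith
  have hsd1 : sin (Δ / 2) ^ 2 ≤ 1 := by
    nlinarith [Real.sin_sq_add_cos_sq (Δ / 2), sq_nonneg (cos (Δ / 2))]
  have hs1 : s < 1 := by nlinarith
  set x₀ : ℝ := 1 - 2 * s with hx₀
  have hxne1 : x₀ ≠ 1 := by simp [hx₀]; linarith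
  have hxnem1 : x₀ ≠ -1 := by simp [hx₀]; intro h; linarith
  -- derivative of inner function
  have hA : HasDerivAt (fun ε : ℝ => ρ₀ + ε * a) a 0 :=
    (hasDerivAt_id 0).mul_const a |>.const_add ρ₀ |>.congr_deriv (by ring)
  have hB : HasDerivAt (fun ε : ℝ => ρ₀ + ε * b) b 0 :=
    (hasDerivAt_id 0).mul_const b |>.const_add ρ₀ |>.congr_deriv (by ring)
  have hsa : HasDerivAt (fun ε : ℝ => sin (ρ₀ + ε * a)) (cos ρ₀ * a) 0 := by
    simpa [Function.comp_def] using (Real.hasDerivAt_sin (ρ₀ + 0 * a)).comp 0 hA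
  have hsb : HasDerivAt (fun ε : ℝ => sin (ρ₀ + ε * b)) (cos ρ₀ * b) 0 := by
    simpa [Function.comp_def] using (Real.hasDerivAt_sin (ρ₀ + 0 * b)).comp 0 hB
  have hca : HasDerivAt (fun ε : ℝ => cos (ρ₀ + ε * a)) (-sin ρ₀ * a) 0 := by
    simpa [Function.comp_def] using (Real.hasDerivAt_cos (ρ₀ + 0 * a)).comp 0 hA
  have hcb : HasDerivAt (fun ε : ℝ => cos (ρ₀ + ε * b)) (-sin ρ₀ * b) 0 := by
    simpa [Function.comp_def] using (Real.hasDerivAt_cos (ρ₀ + 0 * b)).comp 0 hB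
  have hf : HasDerivAt
      (fun ε : ℝ => sin (ρ₀ + ε * a) * sin (ρ₀ + ε * b) * cos Δ +
        cos (ρ₀ + ε * a) * cos (ρ₀ + ε * b))
      ((cos ρ₀ * a * sin ρ₀ + sin ρ₀ * (cos ρ₀ * b)) * cos Δ +
        (-sin ρ₀ * a * cos ρ₀ + cos ρ₀ * (-sin ρ₀ * b))) 0 := by
    simpa [Pi.add_def, Pi.mul_def] using ((hsa.mul hsb).mul_const (cos Δ)).add (hca.mul hcb)
  have hf0 : sin (ρ₀ + 0 * a) * sin (ρ₀ + 0 * b) * cos Δ +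
      cos (ρ₀ + 0 * a) * cos (ρ₀ + 0 * b) = x₀ := by
    have hcd : cos Δ = 1 - 2 * sin (Δ / 2) ^ 2 := by
      have h2 := Real.sin_sq_add_cos_sq (Δ / 2)
      have h3 := Real.cos_two_mul (Δ / 2)
      rw [show 2 * (Δ / 2) = Δ by ring] at h3
      linarith
    simp only [zero_mul, add_zero]
    rw [hcd, hx₀, hs]
    have := Real.sin_sq_add_cos_sq ρ₀
    nlinarith
  have harc : HasDerivAt arccos (-(1 / √(1 - x₀ ^ 2)))
      (sin (ρ₀ + 0 * a) * sin (ρ₀ + 0 * b) * cos Δ +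
        cos (ρ₀ + 0 * a) * cos (ρ₀ + 0 * b)) := by
    rw [hf0]; exact Real.hasDerivAt_arccos hxnem1 hxne1
  have hcomp := harc.comp 0 hf
  refine hcomp.congr_deriv (Eq.symm ?_)
  have hsinl : sin (arccos x₀) = √(1 - x₀ ^ 2) := Real.sin_arccos x₀
  have hcd : cos Δ = 1 - 2 * sin (Δ / 2) ^ 2 := by
    have h2 := Real.sin_sq_add_cos_sq (Δ / 2)
    have h3 := Real.cos_two_mul (Δ / 2)
    rw [show 2 * (Δ / 2) = Δ by ring] at h3
    linarith
  have hsqpos : 0 < √(1 - x₀ ^ 2) := by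
    apply Real.sqrt_pos.2
    nlinarith
  rw [show (1 : ℝ) - 2 * sin ρ₀ ^ 2 * sin (Δ / 2) ^ 2 = x₀ by rw [hx₀, hs]; ring, hsinl]
  field_simp
  rw [Real.sin_two_mul, hcd]
  ring
end

section
/- Let ρ₀ > 0, a, b ∈ ℝ, and Δ ∈ ℝ with sin(Δ/2) ≠ 0. Define D : ℝ → ℝ by D(ε) = arcosh( cosh(ρ₀+εa)·cosh(ρ₀+εb) − sinh(ρ₀+εa)·sinh(ρ₀+εb)·cos Δ ). Then D is differentiable at ε = 0 with derivative D′(0) = sinh(2ρ₀)·(a+b)·sin²(Δ/2) / sinh l₀, where l₀ = arcosh(1 + 2 sinh²ρ₀ sin²(Δ/2)). -/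
open Real

/-- The inverse hyperbolic cosine, `arcosh x = log (x + √(x² − 1))`. -/
noncomputable def arcosh (x : ℝ) : ℝ := Real.log (x + Real.sqrt (x ^ 2 - 1))

lemma sqrt_pos_of_one_lt {x : ℝ} (hx : 1 < x) : 0 < Real.sqrt (x ^ 2 - 1) := by
  apply Real.sqrt_pos.2; nlinarith

lemma sinh_arcosh {x : ℝ} (hx : 1 < x) : Real.sinh (_root_.arcosh x) = Real.sqrt (x ^ 2 - 1) := by
  have hs := sqrt_pos_of_one_lt hx
  have hsq : Real.sqrt (x ^ 2 - 1) ^ 2 = x ^ 2 - 1 := Real.sq_sqrt (by nlinarith)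
  have hpos : 0 < x + Real.sqrt (x ^ 2 - 1) := by linarith
  have hinv : (x + Real.sqrt (x ^ 2 - 1))⁻¹ = x - Real.sqrt (x ^ 2 - 1) := by
    apply inv_eq_of_mul_eq_one_right
    nlinarith
  rw [_root_.arcosh, Real.sinh_eq, Real.exp_neg, Real.exp_log hpos, hinv]
  ring

lemma hasDerivAt_arcosh {x : ℝ} (hx : 1 < x) :
    HasDerivAt _root_.arcosh (1 / Real.sqrt (x ^ 2 - 1)) x := by
  have hs := sqrt_pos_of_one_lt hx
  have hsq : Real.sqrt (x ^ 2 - 1) ^ 2 = x ^ 2 - 1 := Real.sq_sqrt (by nlinarith)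
  have h1 : HasDerivAt (fun y : ℝ => y ^ 2 - 1) (2 * x) x := by
    simpa using ((hasDerivAt_pow 2 x).sub_const 1)
  have h2 : HasDerivAt (fun y : ℝ => Real.sqrt (y ^ 2 - 1))
      (2 * x / (2 * Real.sqrt (x ^ 2 - 1))) x := h1.sqrt (by nlinarith)
  have h3 : HasDerivAt (fun y : ℝ => y + Real.sqrt (y ^ 2 - 1))
      (1 + 2 * x / (2 * Real.sqrt (x ^ 2 - 1))) x := (hasDerivAt_id x).add h2
  have h4 := h3.log (by positivity)
  have heq : (1 + 2 * x / (2 * Real.sqrt (x ^ 2 - 1))) / (x + Real.sqrt (x ^ 2 - 1))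
      = 1 / Real.sqrt (x ^ 2 - 1) := by
    have hne : Real.sqrt (x ^ 2 - 1) ≠ 0 := ne_of_gt hs
    have hpos : x + Real.sqrt (x ^ 2 - 1) ≠ 0 := by positivity
    field_simp
    nlinarith
  rw [heq] at h4
  exact h4

/-- **First-order variation of hyperbolic chord length.** For `ρ₀ > 0`, `a, b ∈ ℝ`
and `Δ` with `sin(Δ/2) ≠ 0`, the function
`D(ε) = arcosh(cosh(ρ₀+εa) cosh(ρ₀+εb) − sinh(ρ₀+εa) sinh(ρ₀+εb) cos Δ)`
is differentiable at `ε = 0` with derivative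
`sinh(2ρ₀)(a+b)sin²(Δ/2)/sinh l₀`, where `l₀ = arcosh(1 + 2 sinh²ρ₀ sin²(Δ/2))`. -/
theorem hyperbolic_chord_variation (ρ₀ : ℝ) (hρ : 0 < ρ₀)
    (a b Δ : ℝ) (hΔ : sin (Δ / 2) ≠ 0) :
    HasDerivAt
      (fun ε : ℝ => _root_.arcosh (cosh (ρ₀ + ε * a) * cosh (ρ₀ + ε * b) -
        sinh (ρ₀ + ε * a) * sinh (ρ₀ + ε * b) * cos Δ))
      (sinh (2 * ρ₀) * (a + b) * sin (Δ / 2) ^ 2 /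
        sinh (_root_.arcosh (1 + 2 * sinh ρ₀ ^ 2 * sin (Δ / 2) ^ 2)))
      0 := by
  set y : ℝ := 1 + 2 * sinh ρ₀ ^ 2 * sin (Δ / 2) ^ 2 with hy
  have hsinh : 0 < sinh ρ₀ := Real.sinh_pos_iff.2 hρ
  have hy1 : 1 < y := by
    have h1 : 0 < sinh ρ₀ ^ 2 := by positivity
    have h2 : 0 < sin (Δ / 2) ^ 2 := by positivity
    rw [hy]; nlinarith
  have hcos : cos Δ = 1 - 2 * sin (Δ / 2) ^ 2 := by
    rw [show Δ = 2 * (Δ / 2) by ring, Real.cos_two_mul']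
    ring_nf
    rw [Real.sin_sq]
    ring
  -- inner function derivative
  have hfa : HasDerivAt (fun ε : ℝ => ρ₀ + ε * a) a 0 := by
    simpa using ((hasDerivAt_id (0:ℝ)).mul_const a).const_add ρ₀
  have hfb : HasDerivAt (fun ε : ℝ => ρ₀ + ε * b) b 0 := by
    simpa using ((hasDerivAt_id (0:ℝ)).mul_const b).const_add ρ₀
  have hg : HasDerivAt
      (fun ε : ℝ => cosh (ρ₀ + ε * a) * cosh (ρ₀ + ε * b) -
        sinh (ρ₀ + ε * a) * sinh (ρ₀ + ε * b) * cos Δ)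
      (sinh (2 * ρ₀) * (a + b) * sin (Δ / 2) ^ 2) 0 := by
    have h := ((hfa.cosh.mul hfb.cosh).sub ((hfa.sinh.mul hfb.sinh).mul_const (cos Δ)))
    refine HasDerivAt.congr_deriv h ?_
    simp only [zero_mul, add_zero]
    rw [hcos, Real.sinh_two_mul]
    ring
  have hg0 : (cosh (ρ₀ + 0 * a) * cosh (ρ₀ + 0 * b) -
      sinh (ρ₀ + 0 * a) * sinh (ρ₀ + 0 * b) * cos Δ) = y := by
    simp only [zero_mul, add_zero]
    rw [hcos, hy]
    have := Real.cosh_sq_sub_sinh_sq ρ₀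
    nlinarith
  have harc : HasDerivAt _root_.arcosh (1 / Real.sqrt (y ^ 2 - 1))
      (cosh (ρ₀ + 0 * a) * cosh (ρ₀ + 0 * b) -
        sinh (ρ₀ + 0 * a) * sinh (ρ₀ + 0 * b) * cos Δ) := by
    rw [hg0]; exact hasDerivAt_arcosh hy1
  have h := harc.comp 0 hg
  refine HasDerivAt.congr_deriv h ?_
  rw [sinh_arcosh hy1]
  ring
end

section
/- Let ρ₀ ∈ (0, π/2), let n ≥ 2 and m be integers with 0 < m < n and gcd(m,n) = 1, let ρ₁ : ℝ → ℝ be 2π-periodic, and fix θ ∈ ℝ. Set θ_j = θ + 2πmj/n and define ℓ : ℝ → ℝ by ℓ(ε) = ∑_{j=0}^{n-1} arccos( sin(ρ₀+ερ₁(θ_j))·sin(ρ₀+ερ₁(θ_{j+1}))·cos(2πm/n) + cos(ρ₀+ερ₁(θ_j))·cos(ρ₀+ερ₁(θ_{j+1})) ). Then ℓ is differentiable at ε = 0 with derivative ℓ′(0) = ( 2 sin(2ρ₀) sin²(πm/n) / sin l₀ ) · ∑_{j=0}^{n-1} ρ₁(θ_j), where l₀ = arccos(1 − 2 sin²ρ₀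 sin²(πm/n)). -/
open Real

set_option maxHeartbeats 2000000 in
/-- **Melnikov potential on the sphere.** For `ρ₀ ∈ (0, π/2)`, integers `0 < m < n`,
`n ≥ 2`, `gcd(m,n) = 1`, a `2π`-periodic `ρ₁ : ℝ → ℝ` and `θ ∈ ℝ`, set
`θ_j = θ + 2πmj/n`. Then `ℓ(ε) = ∑_{j<n} arccos(sin(ρ₀+ερ₁(θ_j)) sin(ρ₀+ερ₁(θ_{j+1})) cos(2πm/n)
+ cos(ρ₀+ερ₁(θ_j)) cos(ρ₀+ερ₁(θ_{j+1})))` is differentiable at `ε = 0` with derivative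
`(2 sin(2ρ₀) sin²(πm/n)/sin l₀) ∑_{j<n} ρ₁(θ_j)`, `l₀ = arccos(1 − 2 sin²ρ₀ sin²(πm/n))`. -/
theorem spherical_melnikov_derivative (ρ₀ : ℝ) (hρ : ρ₀ ∈ Set.Ioo 0 (π / 2))
    (n : ℕ) (hn : 2 ≤ n) (m : ℤ) (hm : 0 < m) (hmn : m < (n : ℤ))
    (hgcd : Int.gcd m (n : ℤ) = 1)
    (ρ₁ : ℝ → ℝ) (hper : Function.Periodic ρ₁ (2 * π)) (θ : ℝ) :
    HasDerivAt
      (fun ε : ℝ => ∑ j ∈ Finset.range n,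
        arccos (sin (ρ₀ + ε * ρ₁ (θ + 2 * π * m * j / n)) *
            sin (ρ₀ + ε * ρ₁ (θ + 2 * π * m * (j + 1) / n)) * cos (2 * π * m / n) +
          cos (ρ₀ + ε * ρ₁ (θ + 2 * π * m * j / n)) *
            cos (ρ₀ + ε * ρ₁ (θ + 2 * π * m * (j + 1) / n))))
      ((2 * sin (2 * ρ₀) * sin (π * m / n) ^ 2 /
          sin (arccos (1 - 2 * sin ρ₀ ^ 2 * sin (π * m / n) ^ 2))) *
        ∑ j ∈ Finset.range n, ρ₁ (θ + 2 * π * m * j / n))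
      0 := by
  obtain ⟨hρ0, hρπ⟩ := hρ
  have hπ : (0:ℝ) < π := Real.pi_pos
  have hn0 : (0:ℝ) < (n:ℝ) := by positivity
  have hnne : (n:ℝ) ≠ 0 := ne_of_gt hn0
  have hm0 : (0:ℝ) < (m:ℝ) := by exact_mod_cast hm
  have hmltn : (m:ℝ) < (n:ℝ) := by exact_mod_cast hmn
  set s := sin (π * m / n) with hs_def
  have hs : 0 < s := by
    apply Real.sin_pos_of_pos_of_lt_pi
    · positivity
    · rw [div_lt_iff₀ hn0]
      nlinarith
  have hs1 : s ≤ 1 := Real.sin_le_one _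
  have hsin0 : 0 < sin ρ₀ := Real.sin_pos_of_pos_of_lt_pi hρ0 (by linarith)
  have hsin1 : sin ρ₀ < 1 := by
    have := Real.sin_lt_sin_of_lt_of_le_pi_div_two (x := ρ₀) (by linarith) (le_refl _) hρπ
    simpa using this
  have hcos0 : 0 < cos ρ₀ := Real.cos_pos_of_mem_Ioo ⟨by linarith, hρπ⟩
  set c₀ : ℝ := 1 - 2 * sin ρ₀ ^ 2 * s ^ 2 with hc₀
  have ha1 : sin ρ₀ ^ 2 < 1 := by nlinarith
  have hb1 : s ^ 2 ≤ 1 := by nlinarith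
  have hxpos : 0 < sin ρ₀ ^ 2 * s ^ 2 := by positivity
  have hxlt : sin ρ₀ ^ 2 * s ^ 2 < 1 := by nlinarith [sq_nonneg s]
  have hc₀lt : c₀ < 1 := by rw [hc₀]; nlinarith
  have hc₀gt : -1 < c₀ := by rw [hc₀]; nlinarith
  have hne1 : c₀ ≠ 1 := ne_of_lt hc₀lt
  have hnem1 : c₀ ≠ -1 := ne_of_gt hc₀gt
  have hsq : 0 < 1 - c₀ ^ 2 := by nlinarith [hc₀lt, hc₀gt]
  have hsqrt : 0 < Real.sqrt (1 - c₀ ^ 2) := Real.sqrt_pos.2 hsq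
  have hsinarc : sin (arccos c₀) = Real.sqrt (1 - c₀ ^ 2) := Real.sin_arccos c₀
  have hC : cos (2 * π * m / n) = 1 - 2 * s ^ 2 := by
    have h2 : 2 * π * (m:ℝ) / n = 2 * (π * m / n) := by ring
    rw [h2, Real.cos_two_mul]
    have := Real.sin_sq_add_cos_sq (π * m / n)
    rw [hs_def]; nlinarith
  -- per-term derivative
  have key : ∀ a b : ℝ, HasDerivAt
      (fun ε : ℝ => arccos (sin (ρ₀ + ε * a) * sin (ρ₀ + ε * b) * cos (2 * π * m / n) +
        cos (ρ₀ + ε * a) * cos (ρ₀ + ε * b)))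
      ((a + b) * (sin (2 * ρ₀) * s ^ 2 / Real.sqrt (1 - c₀ ^ 2))) 0 := by
    intro a b
    have h1 : HasDerivAt (fun ε : ℝ => ρ₀ + ε * a) a 0 := by
      simpa using ((hasDerivAt_id (0:ℝ)).mul_const a).const_add ρ₀
    have h2 : HasDerivAt (fun ε : ℝ => ρ₀ + ε * b) b 0 := by
      simpa using ((hasDerivAt_id (0:ℝ)).mul_const b).const_add ρ₀
    have hg := ((h1.sin.mul h2.sin).mul_const (cos (2 * π * m / n))).add (h1.cos.mul h2.cos)
    have hval : sin ρ₀ * sin ρ₀ * cos (2 * π * m / n) + cos ρ₀ * cos ρ₀ = c₀ := by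
      rw [hC, hc₀]
      have := Real.sin_sq_add_cos_sq ρ₀
      nlinarith
    have hval0 : sin (ρ₀ + 0 * a) * sin (ρ₀ + 0 * b) * cos (2 * π * m / n) +
        cos (ρ₀ + 0 * a) * cos (ρ₀ + 0 * b) = c₀ := by
      simp only [zero_mul, add_zero]; exact hval
    have hA : sin (ρ₀ + 0 * a) * sin (ρ₀ + 0 * b) * cos (2 * π * m / n) +
        cos (ρ₀ + 0 * a) * cos (ρ₀ + 0 * b) ≠ -1 := by rw [hval0]; exact hnem1
    have hB : sin (ρ₀ + 0 * a) * sin (ρ₀ + 0 * b) * cos (2 * π * m / n) +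
        cos (ρ₀ + 0 * a) * cos (ρ₀ + 0 * b) ≠ 1 := by rw [hval0]; exact hne1
    have harc := (Real.hasDerivAt_arccos hA hB).comp 0 hg
    refine harc.congr_deriv (Eq.symm ?_)
    simp only [zero_mul, add_zero]
    rw [hval, hC, Real.sin_two_mul]
    ring
  have hsum := HasDerivAt.fun_sum (u := Finset.range n)
    (fun j _ => key (ρ₁ (θ + 2 * π * m * j / n)) (ρ₁ (θ + 2 * π * m * (j + 1) / n)))
  refine hsum.congr_deriv (Eq.symm ?_)
  rw [hsinarc]
  have hshift : ∑ j ∈ Finset.range n, ρ₁ (θ + 2 * π * m * ((j:ℝ) + 1) / n)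
      = ∑ j ∈ Finset.range n, ρ₁ (θ + 2 * π * m * (j:ℝ) / n) := by
    set f : ℕ → ℝ := fun j => ρ₁ (θ + 2 * π * m * (j:ℝ) / n) with hf
    have hcast : ∀ j : ℕ, ρ₁ (θ + 2 * π * m * ((j:ℝ) + 1) / n) = f (j + 1) := by
      intro j; rw [hf]; push_cast; ring_nf
    have hend : f n = f 0 := by
      rw [hf]
      simp only [Nat.cast_zero]
      have h1 : θ + 2 * π * (m:ℝ) * n / n = θ + (m:ℝ) * (2 * π) := by
        field_simp
      have h2 : θ + 2 * π * (m:ℝ) * 0 / n = θ := by ring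
      rw [h1, h2]
      exact (hper.int_mul m) θ
    have h3 := Finset.sum_range_succ' f n
    have h4 := Finset.sum_range_succ f n
    calc ∑ j ∈ Finset.range n, ρ₁ (θ + 2 * π * m * ((j:ℝ) + 1) / n)
        = ∑ j ∈ Finset.range n, f (j + 1) := Finset.sum_congr rfl (fun j _ => hcast j)
      _ = ∑ j ∈ Finset.range n, f j := by
          have := h3.symm.trans h4
          linarith [this, hend]
  simp only [add_mul]
  rw [Finset.sum_add_distrib, ← Finset.sum_mul, ← Finset.sum_mul, hshift]
  ring
end

section
/- Let ρ₀ > 0, let n ≥ 2 and m be integers with 0 < m < n and gcd(m,n) = 1, let ρ₁ : ℝ → ℝ be 2π-periodic, and fix θ ∈ ℝ. Set θ_j = θ + 2πmj/n and define ℓ : ℝ → ℝ by ℓ(ε) = ∑_{j=0}^{n-1} arcosh( cosh(ρ₀+ερ₁(θ_j))·cosh(ρ₀+ερ₁(θ_{j+1})) − sinh(ρ₀+ερ₁(θ_j))·sinh(ρ₀+ερ₁(θ_{j+1}))·cos(2πm/n) ). Then ℓ is differentiable at ε = 0 with derivative ℓ′(0) = ( 2 sinh(2ρ₀) sin²(πm/n)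 / sinh l₀ ) · ∑_{j=0}^{n-1} ρ₁(θ_j), where l₀ = arcosh(1 + 2 sinh²ρ₀ sin²(πm/n)). -/
open Real

/-- **Melnikov potential on the hyperbolic plane.** For `ρ₀ > 0`, integers `0 < m < n`,
`n ≥ 2`, `gcd(m,n) = 1`, a `2π`-periodic `ρ₁ : ℝ → ℝ` and `θ ∈ ℝ`, set `θ_j = θ + 2πmj/n`.
Then `ℓ(ε) = ∑_{j<n} arcosh(cosh(ρ₀+ερ₁(θ_j)) cosh(ρ₀+ερ₁(θ_{j+1}))
− sinh(ρ₀+ερ₁(θ_j)) sinh(ρ₀+ερ₁(θ_{j+1})) cos(2πm/n))` is differentiable at `ε = 0` with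
derivative `(2 sinh(2ρ₀) sin²(πm/n)/sinh l₀) ∑_{j<n} ρ₁(θ_j)`, where
`l₀ = arcosh(1 + 2 sinh²ρ₀ sin²(πm/n))`. -/
theorem hyperbolic_melnikov_derivative (ρ₀ : ℝ) (hρ : 0 < ρ₀)
    (n : ℕ) (hn : 2 ≤ n) (m : ℤ) (hm : 0 < m) (hmn : m < (n : ℤ))
    (hgcd : Int.gcd m (n : ℤ) = 1)
    (ρ₁ : ℝ → ℝ) (hper : Function.Periodic ρ₁ (2 * π)) (θ : ℝ) :
    HasDerivAt
      (fun ε : ℝ => ∑ j ∈ Finset.range n,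
        _root_.arcosh (cosh (ρ₀ + ε * ρ₁ (θ + 2 * π * m * j / n)) *
            cosh (ρ₀ + ε * ρ₁ (θ + 2 * π * m * (j + 1) / n)) -
          sinh (ρ₀ + ε * ρ₁ (θ + 2 * π * m * j / n)) *
            sinh (ρ₀ + ε * ρ₁ (θ + 2 * π * m * (j + 1) / n)) * cos (2 * π * m / n)))
      ((2 * sinh (2 * ρ₀) * sin (π * m / n) ^ 2 /
          sinh (_root_.arcosh (1 + 2 * sinh ρ₀ ^ 2 * sin (π * m / n) ^ 2))) *
        ∑ j ∈ Finset.range n, ρ₁ (θ + 2 * π * m * j / n))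
      0 := by
  have hn0 : (n : ℝ) ≠ 0 := by positivity
  set σ : ℝ := sin (π * m / n) with hσdef
  have hσpos : 0 < σ := by
    apply Real.sin_pos_of_pos_of_lt_pi
    · have : (0:ℝ) < (m:ℝ) := by exact_mod_cast hm
      positivity
    · rw [div_lt_iff₀ (by positivity)]
      have hmlt : (m:ℝ) < n := by exact_mod_cast hmn
      nlinarith [Real.pi_pos]
  set L : ℝ := 1 + 2 * sinh ρ₀ ^ 2 * σ ^ 2 with hLdef
  have hsinh : 0 < sinh ρ₀ := Real.sinh_pos_iff.mpr hρ
  have hL : 1 < L := by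
    have : 0 < 2 * sinh ρ₀ ^ 2 * σ ^ 2 := by positivity
    simp only [hLdef]; linarith
  have hcos : cos (2 * π * m / n) = 1 - 2 * σ ^ 2 := by
    have h2 : (2 * π * m / n : ℝ) = 2 * (π * m / n) := by ring
    rw [h2, Real.cos_two_mul]
    have := Real.sin_sq_add_cos_sq (π * m / n)
    rw [hσdef]; nlinarith
  set s : ℝ := Real.sqrt (L ^ 2 - 1) with hsdef
  have hs : 0 < s := Real.sqrt_pos.mpr (by nlinarith)
  set r : ℕ → ℝ := fun j => ρ₁ (θ + 2 * π * m * j / n) with hrdef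
  -- derivative of basic pieces
  have hA : ∀ u : ℝ, HasDerivAt (fun ε : ℝ => ρ₀ + ε * u) u 0 := fun u => by
    simpa using ((hasDerivAt_id (0:ℝ)).mul_const u).const_add ρ₀
  have hC : ∀ u : ℝ, HasDerivAt (fun ε : ℝ => cosh (ρ₀ + ε * u)) (sinh ρ₀ * u) 0 :=
    fun u => by simpa using (hA u).cosh
  have hS : ∀ u : ℝ, HasDerivAt (fun ε : ℝ => sinh (ρ₀ + ε * u)) (cosh ρ₀ * u) 0 :=
    fun u => by simpa using (hA u).sinh
  -- each summand
  have key : ∀ j : ℕ,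
      HasDerivAt (fun ε : ℝ =>
        _root_.arcosh (cosh (ρ₀ + ε * ρ₁ (θ + 2 * π * m * j / n)) *
            cosh (ρ₀ + ε * ρ₁ (θ + 2 * π * m * (j + 1) / n)) -
          sinh (ρ₀ + ε * ρ₁ (θ + 2 * π * m * j / n)) *
            sinh (ρ₀ + ε * ρ₁ (θ + 2 * π * m * (j + 1) / n)) * cos (2 * π * m / n)))
        ((r j + r (j + 1)) * (sinh ρ₀ * cosh ρ₀ * (1 - cos (2 * π * m / n))) / s) 0 := by
    intro j
    have hcast : (θ + 2 * π * m * (j + 1) / n : ℝ) = θ + 2 * π * m * ((j : ℕ) + 1 : ℕ) / n := by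
      push_cast; ring
    set u := r j with hu
    set v := r (j + 1) with hv
    have hG : HasDerivAt (fun ε : ℝ =>
        cosh (ρ₀ + ε * u) * cosh (ρ₀ + ε * v) -
          sinh (ρ₀ + ε * u) * sinh (ρ₀ + ε * v) * cos (2 * π * m / n))
        (((sinh ρ₀ * u) * cosh (ρ₀ + 0 * v) + cosh (ρ₀ + 0 * u) * (sinh ρ₀ * v)) -
          ((cosh ρ₀ * u) * sinh (ρ₀ + 0 * v) + sinh (ρ₀ + 0 * u) * (cosh ρ₀ * v)) *
            cos (2 * π * m / n)) 0 :=
      ((hC u).mul (hC v)).sub (((hS u).mul (hS v)).mul_const (cos (2 * π * m / n)))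
    have hG0 : cosh (ρ₀ + (0:ℝ) * u) * cosh (ρ₀ + (0:ℝ) * v) -
        sinh (ρ₀ + (0:ℝ) * u) * sinh (ρ₀ + (0:ℝ) * v) * cos (2 * π * m / n) = L := by
      simp only [zero_mul, add_zero]
      have h1 := Real.cosh_sq_sub_sinh_sq ρ₀
      rw [hcos, hLdef]; nlinarith
    have harc := _root_.hasDerivAt_arcosh hL
    rw [← hG0] at harc
    have hcomp := harc.comp 0 hG
    simp only [Function.comp_def] at hcomp
    rw [hG0] at hcomp
    have heq : (fun ε : ℝ =>
        _root_.arcosh (cosh (ρ₀ + ε * ρ₁ (θ + 2 * π * m * j / n)) *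
            cosh (ρ₀ + ε * ρ₁ (θ + 2 * π * m * (j + 1) / n)) -
          sinh (ρ₀ + ε * ρ₁ (θ + 2 * π * m * j / n)) *
            sinh (ρ₀ + ε * ρ₁ (θ + 2 * π * m * (j + 1) / n)) * cos (2 * π * m / n))) =
        (fun ε : ℝ => _root_.arcosh (cosh (ρ₀ + ε * u) * cosh (ρ₀ + ε * v) -
          sinh (ρ₀ + ε * u) * sinh (ρ₀ + ε * v) * cos (2 * π * m / n))) := by
      funext ε
      rw [hu, hv, hrdef]
      simp only [hcast]
    rw [heq]
    convert hcomp using 1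
    · rfl
    · rfl
    simp only [zero_mul, add_zero]
    rw [hsdef]
    ring
  -- sum
  have hsum := HasDerivAt.fun_sum (fun j (_ : j ∈ Finset.range n) => key j)
  have hrn : r n = r 0 := by
    have : (θ + 2 * π * m * n / n : ℝ) = θ + m * (2 * π) := by field_simp
    simp only [hrdef, this, Nat.cast_zero, mul_zero, zero_div, add_zero]
    exact (hper.int_mul m) θ
  have hshift : ∑ j ∈ Finset.range n, r (j + 1) = ∑ j ∈ Finset.range n, r j := by
    have h1 := Finset.sum_range_succ r n
    have h2 := Finset.sum_range_succ' r n
    rw [h1, hrn] at h2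
    linarith [h2]
  have hfinal : (∑ j ∈ Finset.range n,
        (r j + r (j + 1)) * (sinh ρ₀ * cosh ρ₀ * (1 - cos (2 * π * m / n))) / s)
      = (2 * sinh (2 * ρ₀) * σ ^ 2 / sinh (_root_.arcosh L)) * ∑ j ∈ Finset.range n, r j := by
    rw [_root_.sinh_arcosh hL, ← hsdef, Real.sinh_two_mul, hcos]
    simp only [div_eq_mul_inv]
    rw [← Finset.sum_mul]
    have hstep : ∑ j ∈ Finset.range n,
        (r j + r (j + 1)) * (sinh ρ₀ * cosh ρ₀ * (1 - (1 - 2 * σ ^ 2)))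
        = (∑ j ∈ Finset.range n, (r j + r (j + 1))) * (sinh ρ₀ * cosh ρ₀ * (2 * σ ^ 2)) := by
      rw [← Finset.sum_mul]; ring
    rw [hstep, Finset.sum_add_distrib, hshift]
    ring
  rw [← hfinal]
  exact hsum
end

section
/- Let ρ₀ > 0, let n ≥ 2 and m be integers with 0 < m < n and gcd(m,n) = 1, let ρ₁ : ℝ → ℝ be 2π-periodic, and fix θ ∈ ℝ. Set θ_j = θ + 2πmj/n and define ℓ : ℝ → ℝ by ℓ(ε) = ∑_{j=0}^{n-1} √( (ρ₀+ερ₁(θ_j))² + (ρ₀+ερ₁(θ_{j+1}))² − 2(ρ₀+ερ₁(θ_j))(ρ₀+ερ₁(θ_{j+1}))·cos(2πm/n) ). Then ℓ is differentiable at ε = 0 with derivative ℓ′(0) = ( 4ρ₀ sin²(πm/n) / l₀ ) · ∑_{j=0}^{n-1} ρ₁(θ_j), where l₀ = 2ρ₀·sin(πm/n). -/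
open Real

lemma sqrt_term_deriv (ρ₀ s x y : ℝ) (hρ : 0 < ρ₀) (hs : 0 < s) :
    HasDerivAt (fun ε : ℝ => Real.sqrt ((ρ₀ + ε * x) ^ 2 + (ρ₀ + ε * y) ^ 2 -
      2 * (ρ₀ + ε * x) * (ρ₀ + ε * y) * (1 - 2 * s ^ 2))) (s * (x + y)) 0 := by
  have hx : HasDerivAt (fun ε : ℝ => ρ₀ + ε * x) x 0 := by
    simpa using (((hasDerivAt_id (0 : ℝ)).mul_const x).const_add ρ₀)
  have hy : HasDerivAt (fun ε : ℝ => ρ₀ + ε * y) y 0 := by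
    simpa using (((hasDerivAt_id (0 : ℝ)).mul_const y).const_add ρ₀)
  have hg := ((hx.pow 2).add (hy.pow 2)).sub
    (((hx.mul hy).const_mul 2).mul_const (1 - 2 * s ^ 2))
  have hg0 : ((ρ₀ + (0:ℝ) * x) ^ 2 + (ρ₀ + (0:ℝ) * y) ^ 2 -
      2 * ((ρ₀ + (0:ℝ) * x) * (ρ₀ + (0:ℝ) * y)) * (1 - 2 * s ^ 2)) = (2 * ρ₀ * s) ^ 2 := by
    ring
  have hne : ((ρ₀ + (0:ℝ) * x) ^ 2 + (ρ₀ + (0:ℝ) * y) ^ 2 -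
      2 * ((ρ₀ + (0:ℝ) * x) * (ρ₀ + (0:ℝ) * y)) * (1 - 2 * s ^ 2)) ≠ 0 := by
    rw [hg0]; positivity
  have h := hg.sqrt hne
  have hfun : (fun ε : ℝ => Real.sqrt ((ρ₀ + ε * x) ^ 2 + (ρ₀ + ε * y) ^ 2 -
      2 * (ρ₀ + ε * x) * (ρ₀ + ε * y) * (1 - 2 * s ^ 2))) =
      (fun ε : ℝ => Real.sqrt ((ρ₀ + ε * x) ^ 2 + (ρ₀ + ε * y) ^ 2 -
      2 * ((ρ₀ + ε * x) * (ρ₀ + ε * y)) * (1 - 2 * s ^ 2))) := by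
    funext ε; congr 1; ring
  rw [hfun]
  convert h using 1
  · rfl
  simp only [Pi.add_apply, Pi.sub_apply, Pi.pow_apply, Pi.mul_apply]
  rw [hg0, Real.sqrt_sq (by positivity : (0:ℝ) ≤ 2 * ρ₀ * s)]
  field_simp
  ring

/-- **Planar Melnikov potential (Ramírez-Ros).** For `ρ₀ > 0`, integers `0 < m < n`,
`n ≥ 2`, `gcd(m,n) = 1`, a `2π`-periodic `ρ₁ : ℝ → ℝ` and `θ ∈ ℝ`, set `θ_j = θ + 2πmj/n`.
Then `ℓ(ε) = ∑_{j<n} √((ρ₀+ερ₁(θ_j))² + (ρ₀+ερ₁(θ_{j+1}))²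
− 2(ρ₀+ερ₁(θ_j))(ρ₀+ερ₁(θ_{j+1})) cos(2πm/n))` is differentiable at `ε = 0` with derivative
`(4ρ₀ sin²(πm/n)/l₀) ∑_{j<n} ρ₁(θ_j)`, where `l₀ = 2ρ₀ sin(πm/n)`. -/
theorem euclidean_melnikov_derivative (ρ₀ : ℝ) (hρ : 0 < ρ₀)
    (n : ℕ) (hn : 2 ≤ n) (m : ℤ) (hm : 0 < m) (hmn : m < (n : ℤ))
    (hgcd : Int.gcd m (n : ℤ) = 1)
    (ρ₁ : ℝ → ℝ) (hper : Function.Periodic ρ₁ (2 * π)) (θ : ℝ) :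
    HasDerivAt
      (fun ε : ℝ => ∑ j ∈ Finset.range n,
        Real.sqrt ((ρ₀ + ε * ρ₁ (θ + 2 * π * m * j / n)) ^ 2 +
          (ρ₀ + ε * ρ₁ (θ + 2 * π * m * (j + 1) / n)) ^ 2 -
          2 * (ρ₀ + ε * ρ₁ (θ + 2 * π * m * j / n)) *
            (ρ₀ + ε * ρ₁ (θ + 2 * π * m * (j + 1) / n)) * cos (2 * π * m / n)))
      ((4 * ρ₀ * sin (π * m / n) ^ 2 / (2 * ρ₀ * sin (π * m / n))) *
        ∑ j ∈ Finset.range n, ρ₁ (θ + 2 * π * m * j / n))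
      0 := by
  have hn0 : (0:ℝ) < (n : ℝ) := by positivity
  have hmr : (0:ℝ) < (m : ℝ) := by exact_mod_cast hm
  have hmnr : (m : ℝ) < (n : ℝ) := by exact_mod_cast hmn
  set s : ℝ := sin (π * m / n) with hs_def
  have hs : 0 < s := by
    apply Real.sin_pos_of_pos_of_lt_pi
    · positivity
    · rw [div_lt_iff₀ hn0]
      nlinarith [Real.pi_pos]
  have hcos : cos (2 * π * m / n) = 1 - 2 * s ^ 2 := by
    have h2 : 2 * π * m / n = 2 * (π * m / n) := by ring
    rw [h2, Real.cos_two_mul, hs_def]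
    have := Real.sin_sq_add_cos_sq (π * m / n)
    nlinarith
  set X : ℕ → ℝ := fun j => ρ₁ (θ + 2 * π * m * j / n) with hX
  have key : ∀ j ∈ Finset.range n,
      HasDerivAt (fun ε : ℝ =>
        Real.sqrt ((ρ₀ + ε * ρ₁ (θ + 2 * π * m * j / n)) ^ 2 +
          (ρ₀ + ε * ρ₁ (θ + 2 * π * m * (j + 1) / n)) ^ 2 -
          2 * (ρ₀ + ε * ρ₁ (θ + 2 * π * m * j / n)) *
            (ρ₀ + ε * ρ₁ (θ + 2 * π * m * (j + 1) / n)) * cos (2 * π * m / n)))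
        (s * (X j + X (j + 1))) 0 := by
    intro j _
    have hc : (θ + 2 * π * m * ((j : ℝ) + 1) / n) = (θ + 2 * π * m * ((j + 1 : ℕ) : ℝ) / n) := by
      push_cast; ring
    rw [hcos]
    simpa [hX, hc] using sqrt_term_deriv ρ₀ s (X j) (X (j + 1)) hρ hs
  have hsum := HasDerivAt.fun_sum key
  refine hsum.congr_deriv ?_
  have hXn : X n = X 0 := by
    have h1 : θ + 2 * π * m * (n : ℝ) / n = θ + (m : ℝ) * (2 * π) := by
      field_simp
    have h2 := (hper.int_mul m) θ
    have h3 : X n = ρ₁ θ := by simp only [hX]; rw [h1]; exact h2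
    have h4 : X 0 = ρ₁ θ := by simp [hX]
    rw [h3, h4]
  have hshift : ∑ j ∈ Finset.range n, X (j + 1) = ∑ j ∈ Finset.range n, X j := by
    have h1 := Finset.sum_range_succ' X n
    have h2 := Finset.sum_range_succ X n
    linarith [hXn]
  have hdist : ∑ i ∈ Finset.range n, s * (X i + X (i + 1)) =
      s * ((∑ i ∈ Finset.range n, X i) + ∑ i ∈ Finset.range n, X (i + 1)) := by
    rw [← Finset.mul_sum, Finset.sum_add_distrib]
  rw [hdist, hshift]
  field_simp
  ring
end

section
/- Let ρ₀ ∈ (0, π/2), let n ≥ 2 and m be integers with 0 < m < n and gcd(m,n) = 1, and let ρ₁ : ℝ → ℝ be continuous and 2π-periodic. For θ ∈ ℝ set θ_j = θ + 2πmj/n and define M(θ) as the derivative at ε = 0 of ε ↦ ∑_{j=0}^{n-1} arccos( sin(ρ₀+ερ₁(θ_j))·sin(ρ₀+ερ₁(θ_{j+1}))·cos(2πm/n) + cos(ρ₀+ερ₁(θ_j))·cos(ρ₀+ερ₁(θ_{j+1})) ). If there exists k ∈ ℤ with k ≠ 0, n ∣ k, and the k-th Fourier coefficient of ρ₁ nonzero,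 then M is not constant on ℝ. -/
open Real

private lemma term_hasDerivAt (ρ₀ cδ A B : ℝ)
    (h₁ : sin ρ₀ * sin ρ₀ * cδ + cos ρ₀ * cos ρ₀ ≠ -1)
    (h₂ : sin ρ₀ * sin ρ₀ * cδ + cos ρ₀ * cos ρ₀ ≠ 1) :
    HasDerivAt (fun ε : ℝ => arccos (sin (ρ₀ + ε * A) * sin (ρ₀ + ε * B) * cδ +
        cos (ρ₀ + ε * A) * cos (ρ₀ + ε * B)))
      (-(1 / Real.sqrt (1 - (sin ρ₀ * sin ρ₀ * cδ + cos ρ₀ * cos ρ₀) ^ 2)) *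
        (sin ρ₀ * cos ρ₀ * (cδ - 1) * (A + B))) 0 := by
  have hA : HasDerivAt (fun ε : ℝ => ρ₀ + ε * A) A 0 := by
    simpa using ((hasDerivAt_id (0 : ℝ)).mul_const A).const_add ρ₀
  have hB : HasDerivAt (fun ε : ℝ => ρ₀ + ε * B) B 0 := by
    simpa using ((hasDerivAt_id (0 : ℝ)).mul_const B).const_add ρ₀
  have hsA : HasDerivAt (fun ε : ℝ => sin (ρ₀ + ε * A)) (cos ρ₀ * A) 0 := by
    simpa using hA.sin
  have hsB : HasDerivAt (fun ε : ℝ => sin (ρ₀ + ε * B)) (cos ρ₀ * B) 0 := by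
    simpa using hB.sin
  have hcA : HasDerivAt (fun ε : ℝ => cos (ρ₀ + ε * A)) (-sin ρ₀ * A) 0 := by
    simpa using hA.cos
  have hcB : HasDerivAt (fun ε : ℝ => cos (ρ₀ + ε * B)) (-sin ρ₀ * B) 0 := by
    simpa using hB.cos
  have hu : HasDerivAt (fun ε : ℝ => sin (ρ₀ + ε * A) * sin (ρ₀ + ε * B) * cδ +
      cos (ρ₀ + ε * A) * cos (ρ₀ + ε * B))
      (sin ρ₀ * cos ρ₀ * (cδ - 1) * (A + B)) 0 := by
    have h := ((hsA.fun_mul hsB).mul_const cδ).fun_add (hcA.fun_mul hcB)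
    refine h.congr_deriv ?_
    norm_num
    ring
  have harc : HasDerivAt arccos
      (-(1 / Real.sqrt (1 - (sin ρ₀ * sin ρ₀ * cδ + cos ρ₀ * cos ρ₀) ^ 2)))
      ((fun ε : ℝ => sin (ρ₀ + ε * A) * sin (ρ₀ + ε * B) * cδ +
        cos (ρ₀ + ε * A) * cos (ρ₀ + ε * B)) 0) := by
    simp only [zero_mul, add_zero]
    exact Real.hasDerivAt_arccos h₁ h₂
  have := harc.comp 0 hu; exact this

set_option maxHeartbeats 1000000 in
/-- **Break-up criterion on the sphere.** For `ρ₀ ∈ (0, π/2)`, integers `0 < m < n`,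
`n ≥ 2`, `gcd(m,n) = 1`, and a continuous `2π`-periodic `ρ₁ : ℝ → ℝ`, let `M(θ)` be the
derivative at `ε = 0` of the total spherical length of the `(m,n)`-polygon inscribed in the
perturbed geodesic circle `ρ₀ + ερ₁` with impact angles `θ_j = θ + 2πmj/n`. If `ρ₁` has a
nonzero Fourier coefficient at some nonzero frequency `k` divisible by `n`, then `M` is not
constant. -/
theorem spherical_melnikov_not_constant (ρ₀ : ℝ) (hρ : ρ₀ ∈ Set.Ioo 0 (π / 2))
    (n : ℕ) (hn : 2 ≤ n) (m : ℤ) (hm : 0 < m) (hmn : m < (n : ℤ))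
    (hgcd : Int.gcd m (n : ℤ) = 1)
    (ρ₁ : ℝ → ℝ) (hc : Continuous ρ₁) (hper : Function.Periodic ρ₁ (2 * π))
    (M : ℝ → ℝ)
    (hM : ∀ θ : ℝ, M θ =
      deriv (fun ε : ℝ => ∑ j ∈ Finset.range n,
        arccos (sin (ρ₀ + ε * ρ₁ (θ + 2 * π * m * j / n)) *
            sin (ρ₀ + ε * ρ₁ (θ + 2 * π * m * (j + 1) / n)) * cos (2 * π * m / n) +
          cos (ρ₀ + ε * ρ₁ (θ + 2 * π * m * j / n)) *
            cos (ρ₀ + ε * ρ₁ (θ + 2 * π * m * (j + 1) / n)))) 0)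
    (h : ∃ k : ℤ, k ≠ 0 ∧ (n : ℤ) ∣ k ∧
      fourierCoeff2pi (fun θ => ((ρ₁ θ : ℝ) : ℂ)) k ≠ 0) :
    ¬ ∃ c : ℝ, ∀ θ : ℝ, M θ = c := by
  rintro ⟨c, hcc⟩
  obtain ⟨k, hk0, ⟨l, hkl⟩, hkne⟩ := h
  obtain ⟨hρ0, hρπ⟩ := hρ
  have hπ := Real.pi_pos
  have hnR : (0 : ℝ) < (n : ℝ) := by exact_mod_cast (by omega : 0 < n)
  have hmR : (0 : ℝ) < (m : ℝ) := by exact_mod_cast hm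
  have hmnR : (m : ℝ) < (n : ℝ) := by exact_mod_cast hmn
  set δ : ℝ := 2 * π * (m : ℝ) / (n : ℝ) with hδdef
  have hδ0 : 0 < δ := by
    rw [hδdef]
    exact div_pos (by nlinarith) hnR
  have hδlt : δ < 2 * π := by
    rw [hδdef, div_lt_iff₀ hnR]
    nlinarith
  have hsinh : 0 < sin (δ / 2) := Real.sin_pos_of_pos_of_lt_pi (by linarith) (by linarith)
  have hδhalf : cos δ = cos (δ / 2) ^ 2 - sin (δ / 2) ^ 2 := by
    have h := Real.cos_two_mul' (x := δ / 2)
    rwa [show 2 * (δ / 2) = δ by ring] at h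
  have hcosδlt : cos δ < 1 := by nlinarith [Real.sin_sq_add_cos_sq (δ / 2)]
  have hcosδge := Real.neg_one_le_cos δ
  have hsρ : 0 < sin ρ₀ := Real.sin_pos_of_pos_of_lt_pi hρ0 (by linarith)
  have hcρ : 0 < cos ρ₀ := Real.cos_pos_of_mem_Ioo ⟨by linarith, hρπ⟩
  have hpyth := Real.sin_sq_add_cos_sq ρ₀
  set u₀ : ℝ := sin ρ₀ * sin ρ₀ * cos δ + cos ρ₀ * cos ρ₀ with hu₀
  have h₁ : -1 < u₀ := by rw [hu₀]; nlinarith [mul_pos hcρ hcρ, sq_nonneg (sin ρ₀)]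
  have h₂ : u₀ < 1 := by rw [hu₀]; nlinarith [mul_pos hsρ hsρ]
  have hsq : 0 < Real.sqrt (1 - u₀ ^ 2) := Real.sqrt_pos.2 (by nlinarith)
  set Cf : ℝ := -(1 / Real.sqrt (1 - u₀ ^ 2)) * (sin ρ₀ * cos ρ₀ * (cos δ - 1)) with hCf
  have hCfpos : 0 < Cf := by
    have h5 : 0 < 1 / Real.sqrt (1 - u₀ ^ 2) := by positivity
    have h6 : 0 < sin ρ₀ * cos ρ₀ * (1 - cos δ) := by
      apply mul_pos (mul_pos hsρ hcρ); linarith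
    calc (0:ℝ) < 1 / Real.sqrt (1 - u₀ ^ 2) * (sin ρ₀ * cos ρ₀ * (1 - cos δ)) := mul_pos h5 h6
    _ = Cf := by rw [hCf]; ring
  -- the shift identity for the sum
  have hshift : ∀ θ : ℝ, ∑ j ∈ Finset.range n, ρ₁ (θ + 2 * π * (m : ℝ) * ((j : ℝ) + 1) / (n : ℝ))
      = ∑ j ∈ Finset.range n, ρ₁ (θ + 2 * π * (m : ℝ) * (j : ℝ) / (n : ℝ)) := by
    intro θ
    have h1 : ∑ j ∈ Finset.range (n + 1), ρ₁ (θ + 2 * π * (m : ℝ) * (j : ℝ) / (n : ℝ))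
        = (∑ j ∈ Finset.range n, ρ₁ (θ + 2 * π * (m : ℝ) * ((j : ℝ) + 1) / (n : ℝ)))
          + ρ₁ (θ + 2 * π * (m : ℝ) * ((0 : ℕ) : ℝ) / (n : ℝ)) := by
      rw [Finset.sum_range_succ']
      congr 1
      apply Finset.sum_congr rfl
      intro j _
      congr 1
      push_cast
      ring
    have h2 : ∑ j ∈ Finset.range (n + 1), ρ₁ (θ + 2 * π * (m : ℝ) * (j : ℝ) / (n : ℝ))
        = (∑ j ∈ Finset.range n, ρ₁ (θ + 2 * π * (m : ℝ) * (j : ℝ) / (n : ℝ)))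
          + ρ₁ (θ + 2 * π * (m : ℝ) * ((n : ℕ) : ℝ) / (n : ℝ)) := Finset.sum_range_succ _ n
    have h3 : ρ₁ (θ + 2 * π * (m : ℝ) * ((n : ℕ) : ℝ) / (n : ℝ)) = ρ₁ θ := by
      have he : θ + 2 * π * (m : ℝ) * ((n : ℕ) : ℝ) / (n : ℝ) = θ + (m : ℝ) * (2 * π) := by
        field_simp
      rw [he]
      exact (hper.int_mul m) θ
    have h4 : ρ₁ (θ + 2 * π * (m : ℝ) * ((0 : ℕ) : ℝ) / (n : ℝ)) = ρ₁ θ := by norm_num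
    rw [h3] at h2
    rw [h4] at h1
    linarith
  -- compute M
  have hMeq : ∀ θ : ℝ, M θ =
      Cf * (2 * ∑ j ∈ Finset.range n, ρ₁ (θ + 2 * π * (m : ℝ) * (j : ℝ) / (n : ℝ))) := by
    intro θ
    have hF : HasDerivAt (fun ε : ℝ => ∑ j ∈ Finset.range n,
        arccos (sin (ρ₀ + ε * ρ₁ (θ + 2 * π * (m : ℝ) * (j : ℝ) / (n : ℝ))) *
            sin (ρ₀ + ε * ρ₁ (θ + 2 * π * (m : ℝ) * ((j : ℝ) + 1) / (n : ℝ))) * cos δ +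
          cos (ρ₀ + ε * ρ₁ (θ + 2 * π * (m : ℝ) * (j : ℝ) / (n : ℝ))) *
            cos (ρ₀ + ε * ρ₁ (θ + 2 * π * (m : ℝ) * ((j : ℝ) + 1) / (n : ℝ)))))
        (∑ j ∈ Finset.range n, -(1 / Real.sqrt (1 - u₀ ^ 2)) *
          (sin ρ₀ * cos ρ₀ * (cos δ - 1) *
            (ρ₁ (θ + 2 * π * (m : ℝ) * (j : ℝ) / (n : ℝ)) +
              ρ₁ (θ + 2 * π * (m : ℝ) * ((j : ℝ) + 1) / (n : ℝ))))) 0 :=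
      HasDerivAt.fun_sum fun j _ =>
        term_hasDerivAt ρ₀ (cos δ) _ _ (ne_of_gt h₁) (ne_of_lt h₂)
    rw [hM θ, hF.deriv]
    have hc1 : ∀ j ∈ Finset.range n, -(1 / Real.sqrt (1 - u₀ ^ 2)) *
        (sin ρ₀ * cos ρ₀ * (cos δ - 1) *
          (ρ₁ (θ + 2 * π * (m : ℝ) * (j : ℝ) / (n : ℝ)) +
            ρ₁ (θ + 2 * π * (m : ℝ) * ((j : ℝ) + 1) / (n : ℝ))))
        = Cf * ρ₁ (θ + 2 * π * (m : ℝ) * (j : ℝ) / (n : ℝ))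
          + Cf * ρ₁ (θ + 2 * π * (m : ℝ) * ((j : ℝ) + 1) / (n : ℝ)) := fun j _ => by
      rw [hCf]; ring
    rw [Finset.sum_congr rfl hc1, Finset.sum_add_distrib, ← Finset.mul_sum, ← Finset.mul_sum,
      hshift θ]
    ring
  -- constancy of the circular sum
  have hS : ∀ θ : ℝ, (∑ j ∈ Finset.range n, ρ₁ (θ + 2 * π * (m : ℝ) * (j : ℝ) / (n : ℝ)))
      = ∑ j ∈ Finset.range n, ρ₁ (0 + 2 * π * (m : ℝ) * (j : ℝ) / (n : ℝ)) := by
    intro θ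
    have e1 := (hMeq θ).symm.trans (hcc θ)
    have e2 := (hMeq 0).symm.trans (hcc 0)
    have e3 := e1.trans e2.symm
    have := mul_left_cancel₀ (ne_of_gt hCfpos) e3
    linarith
  -- Fourier part
  have hnC : ((n : ℕ) : ℂ) ≠ 0 := Nat.cast_ne_zero.2 (by omega)
  have gper : Function.Periodic
      (fun θ : ℝ => ((ρ₁ θ : ℝ) : ℂ) * Complex.exp (-Complex.I * (k : ℂ) * (θ : ℂ)))
      (2 * π) := by
    intro x
    have h1 : ρ₁ (x + 2 * π) = ρ₁ x := hper x
    have h2 : Complex.exp (-Complex.I * (k : ℂ) * ((x + 2 * π : ℝ) : ℂ))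
        = Complex.exp (-Complex.I * (k : ℂ) * (x : ℂ)) := by
      rw [show (-Complex.I * (k : ℂ) * ((x + 2 * π : ℝ) : ℂ))
          = -Complex.I * (k : ℂ) * (x : ℂ) + ((-k : ℤ) : ℂ) * (2 * (π : ℂ) * Complex.I) by
        push_cast; ring]
      rw [Complex.exp_add, Complex.exp_int_mul_two_pi_mul_I, mul_one]
    simp only [h1, h2]
  have hshiftInt : ∀ a : ℝ, Complex.exp (-Complex.I * (k : ℂ) * (a : ℂ)) = 1 →
      (∫ θ in (0:ℝ)..(2 * π), ((ρ₁ (θ + a) : ℝ) : ℂ) * Complex.exp (-Complex.I * (k : ℂ) * (θ : ℂ)))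
        = ∫ θ in (0:ℝ)..(2 * π), ((ρ₁ θ : ℝ) : ℂ) * Complex.exp (-Complex.I * (k : ℂ) * (θ : ℂ)) := by
    intro a ha
    have h1 : ∀ θ : ℝ, ((ρ₁ (θ + a) : ℝ) : ℂ) * Complex.exp (-Complex.I * (k : ℂ) * (θ : ℂ))
        = ((ρ₁ (θ + a) : ℝ) : ℂ) * Complex.exp (-Complex.I * (k : ℂ) * ((θ + a : ℝ) : ℂ)) := by
      intro θ
      rw [show (-Complex.I * (k : ℂ) * ((θ + a : ℝ) : ℂ))
          = -Complex.I * (k : ℂ) * (θ : ℂ) + -Complex.I * (k : ℂ) * (a : ℂ) by push_cast; ring,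
        Complex.exp_add, ha, mul_one]
    simp_rw [h1]
    rw [intervalIntegral.integral_comp_add_right
      (fun θ : ℝ => ((ρ₁ θ : ℝ) : ℂ) * Complex.exp (-Complex.I * (k : ℂ) * (θ : ℂ))) a]
    rw [show (0 : ℝ) + a = a by ring, show 2 * π + a = a + 2 * π by ring]
    rw [gper.intervalIntegral_add_eq a 0]
    norm_num
  have hone : ∀ j : ℕ,
      Complex.exp (-Complex.I * (k : ℂ) * ((2 * π * (m : ℝ) * (j : ℝ) / (n : ℝ) : ℝ) : ℂ)) = 1 := by
    intro j
    have he : (-Complex.I * (k : ℂ) * ((2 * π * (m : ℝ) * (j : ℝ) / (n : ℝ) : ℝ) : ℂ))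
        = ((-(l * m * j) : ℤ) : ℂ) * (2 * (π : ℂ) * Complex.I) := by
      rw [hkl]
      push_cast
      field_simp
    rw [he, Complex.exp_int_mul_two_pi_mul_I]
  have hintexp : (∫ θ in (0:ℝ)..(2 * π), Complex.exp (-Complex.I * (k : ℂ) * (θ : ℂ))) = 0 := by
    have hc0 : (-Complex.I * (k : ℂ)) ≠ 0 := by
      apply mul_ne_zero (neg_ne_zero.2 Complex.I_ne_zero)
      exact_mod_cast hk0
    rw [integral_exp_mul_complex hc0]
    have h2 : Complex.exp (-Complex.I * (k : ℂ) * ((2 * π : ℝ) : ℂ)) = 1 := by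
      rw [show -Complex.I * (k : ℂ) * ((2 * π : ℝ) : ℂ)
          = ((-k : ℤ) : ℂ) * (2 * (π : ℂ) * Complex.I) by push_cast; ring]
      exact Complex.exp_int_mul_two_pi_mul_I _
    rw [h2]
    norm_num
  have hI0 : (∫ θ in (0:ℝ)..(2 * π),
      ((ρ₁ θ : ℝ) : ℂ) * Complex.exp (-Complex.I * (k : ℂ) * (θ : ℂ))) ≠ 0 := by
    intro h0
    apply hkne
    simp only [fourierCoeff2pi]
    rw [h0, mul_zero]
  -- interchange and conclude
  have hsum : (∫ θ in (0:ℝ)..(2 * π), ∑ j ∈ Finset.range n,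
      ((ρ₁ (θ + 2 * π * (m : ℝ) * (j : ℝ) / (n : ℝ)) : ℝ) : ℂ) *
        Complex.exp (-Complex.I * (k : ℂ) * (θ : ℂ)))
      = ∑ j ∈ Finset.range n, ∫ θ in (0:ℝ)..(2 * π),
        ((ρ₁ (θ + 2 * π * (m : ℝ) * (j : ℝ) / (n : ℝ)) : ℝ) : ℂ) *
          Complex.exp (-Complex.I * (k : ℂ) * (θ : ℂ)) := by
    apply intervalIntegral.integral_finset_sum
    intro j _
    apply Continuous.intervalIntegrable
    exact (Complex.continuous_ofReal.comp
        (hc.comp (continuous_add_right (2 * π * (m : ℝ) * (j : ℝ) / (n : ℝ))))).mul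
      (Complex.continuous_exp.comp (continuous_const.mul Complex.continuous_ofReal))
  have hleft : (∫ θ in (0:ℝ)..(2 * π), ∑ j ∈ Finset.range n,
      ((ρ₁ (θ + 2 * π * (m : ℝ) * (j : ℝ) / (n : ℝ)) : ℝ) : ℂ) *
        Complex.exp (-Complex.I * (k : ℂ) * (θ : ℂ))) = 0 := by
    have hpt : ∀ θ : ℝ, ∑ j ∈ Finset.range n,
        ((ρ₁ (θ + 2 * π * (m : ℝ) * (j : ℝ) / (n : ℝ)) : ℝ) : ℂ) *
          Complex.exp (-Complex.I * (k : ℂ) * (θ : ℂ))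
        = (((∑ j ∈ Finset.range n, ρ₁ (0 + 2 * π * (m : ℝ) * (j : ℝ) / (n : ℝ))) : ℝ) : ℂ) *
          Complex.exp (-Complex.I * (k : ℂ) * (θ : ℂ)) := by
      intro θ
      rw [← Finset.sum_mul]
      congr 1
      rw [← hS θ]
      push_cast
      rfl
    simp_rw [hpt]
    rw [intervalIntegral.integral_const_mul, hintexp, mul_zero]
  have hterms : ∀ j ∈ Finset.range n,
      (∫ θ in (0:ℝ)..(2 * π),
        ((ρ₁ (θ + 2 * π * (m : ℝ) * (j : ℝ) / (n : ℝ)) : ℝ) : ℂ) *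
          Complex.exp (-Complex.I * (k : ℂ) * (θ : ℂ)))
      = ∫ θ in (0:ℝ)..(2 * π), ((ρ₁ θ : ℝ) : ℂ) * Complex.exp (-Complex.I * (k : ℂ) * (θ : ℂ)) :=
    fun j _ => hshiftInt _ (hone j)
  have key : ((n : ℕ) : ℂ) * (∫ θ in (0:ℝ)..(2 * π),
      ((ρ₁ θ : ℝ) : ℂ) * Complex.exp (-Complex.I * (k : ℂ) * (θ : ℂ))) = 0 := by
    calc ((n : ℕ) : ℂ) * (∫ θ in (0:ℝ)..(2 * π),
        ((ρ₁ θ : ℝ) : ℂ) * Complex.exp (-Complex.I * (k : ℂ) * (θ : ℂ)))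
        = ∑ _j ∈ Finset.range n, ∫ θ in (0:ℝ)..(2 * π),
            ((ρ₁ θ : ℝ) : ℂ) * Complex.exp (-Complex.I * (k : ℂ) * (θ : ℂ)) := by
          rw [Finset.sum_const, Finset.card_range, nsmul_eq_mul]
      _ = ∑ j ∈ Finset.range n, ∫ θ in (0:ℝ)..(2 * π),
            ((ρ₁ (θ + 2 * π * (m : ℝ) * (j : ℝ) / (n : ℝ)) : ℝ) : ℂ) *
              Complex.exp (-Complex.I * (k : ℂ) * (θ : ℂ)) :=
          (Finset.sum_congr rfl hterms).symm
      _ = ∫ θ in (0:ℝ)..(2 * π), ∑ j ∈ Finset.range n,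
            ((ρ₁ (θ + 2 * π * (m : ℝ) * (j : ℝ) / (n : ℝ)) : ℝ) : ℂ) *
              Complex.exp (-Complex.I * (k : ℂ) * (θ : ℂ)) := hsum.symm
      _ = 0 := hleft
  exact hI0 ((mul_eq_zero.mp key).resolve_left hnC)
end

section
/- Let ρ₀ > 0, let n ≥ 2 and m be integers with 0 < m < n and gcd(m,n) = 1, and let ρ₁ : ℝ → ℝ be continuous and 2π-periodic. For θ ∈ ℝ set θ_j = θ + 2πmj/n and define M(θ) as the derivative at ε = 0 of ε ↦ ∑_{j=0}^{n-1} arcosh( cosh(ρ₀+ερ₁(θ_j))·cosh(ρ₀+ερ₁(θ_{j+1})) − sinh(ρ₀+ερ₁(θ_j))·sinh(ρ₀+ερ₁(θ_{j+1}))·cos(2πm/n) ). If there exists k ∈ ℤ with k ≠ 0, n ∣ k, and the k-th Fourier coefficient of ρ₁ nonzero, then M is not constant on ℝ. -/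
open Real

lemma hasDerivAt_inner' (ρ₀ p q c : ℝ) :
    HasDerivAt (fun ε : ℝ => Real.cosh (ρ₀ + ε * p) * Real.cosh (ρ₀ + ε * q) -
      Real.sinh (ρ₀ + ε * p) * Real.sinh (ρ₀ + ε * q) * c)
      (Real.sinh ρ₀ * Real.cosh ρ₀ * (1 - c) * (p + q)) 0 := by
  have hp : HasDerivAt (fun ε : ℝ => ρ₀ + ε * p) p 0 := by
    simpa using ((hasDerivAt_id (0:ℝ)).mul_const p).const_add ρ₀
  have hq : HasDerivAt (fun ε : ℝ => ρ₀ + ε * q) q 0 := by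
    simpa using ((hasDerivAt_id (0:ℝ)).mul_const q).const_add ρ₀
  have h := ((hp.cosh.mul hq.cosh).sub ((hp.sinh.mul hq.sinh).mul_const c))
  refine h.congr_deriv ?_
  simp only [zero_mul, add_zero]
  ring

/-- The positive constant in the Melnikov potential. -/
noncomputable def Kc (ρ₀ c : ℝ) : ℝ :=
  Real.sinh ρ₀ * Real.cosh ρ₀ * (1 - c) /
    Real.sqrt ((Real.cosh ρ₀ * Real.cosh ρ₀ - Real.sinh ρ₀ * Real.sinh ρ₀ * c) ^ 2 - 1)

lemma x0_gt_one {ρ₀ c : ℝ} (hρ : 0 < ρ₀) (hc : c < 1) :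
    1 < Real.cosh ρ₀ * Real.cosh ρ₀ - Real.sinh ρ₀ * Real.sinh ρ₀ * c := by
  have h1 : Real.cosh ρ₀ ^ 2 = Real.sinh ρ₀ ^ 2 + 1 := Real.cosh_sq ρ₀
  have h2 : 0 < Real.sinh ρ₀ := Real.sinh_pos_iff.2 hρ
  nlinarith [mul_pos (mul_pos h2 h2) (by linarith : (0:ℝ) < 1 - c)]

lemma Kc_pos {ρ₀ c : ℝ} (hρ : 0 < ρ₀) (hc : c < 1) : 0 < Kc ρ₀ c := by
  have hx := x0_gt_one hρ hc
  have h2 : 0 < Real.sinh ρ₀ := Real.sinh_pos_iff.2 hρ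
  have h3 : 0 < Real.cosh ρ₀ := Real.cosh_pos ρ₀
  have hs : 0 < Real.sqrt ((Real.cosh ρ₀ * Real.cosh ρ₀ - Real.sinh ρ₀ * Real.sinh ρ₀ * c) ^ 2 - 1) := by
    apply Real.sqrt_pos.2
    nlinarith
  exact div_pos (mul_pos (mul_pos h2 h3) (by linarith)) hs

lemma term_hasDerivAt_s12 (ρ₀ p q c : ℝ) (hρ : 0 < ρ₀) (hc : c < 1) :
    HasDerivAt (fun ε : ℝ => _root_.arcosh (Real.cosh (ρ₀ + ε * p) * Real.cosh (ρ₀ + ε * q) -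
      Real.sinh (ρ₀ + ε * p) * Real.sinh (ρ₀ + ε * q) * c))
      (Kc ρ₀ c * (p + q)) 0 := by
  have hinner := hasDerivAt_inner' ρ₀ p q c
  have hx0' : (1:ℝ) < Real.cosh (ρ₀ + 0 * p) * Real.cosh (ρ₀ + 0 * q) -
      Real.sinh (ρ₀ + 0 * p) * Real.sinh (ρ₀ + 0 * q) * c := by
    simpa using x0_gt_one hρ hc
  have hcomp := (_root_.hasDerivAt_arcosh hx0').comp 0 hinner
  have hcomp' : HasDerivAt (fun ε : ℝ => _root_.arcosh (Real.cosh (ρ₀ + ε * p) * Real.cosh (ρ₀ + ε * q) -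
      Real.sinh (ρ₀ + ε * p) * Real.sinh (ρ₀ + ε * q) * c))
      (1 / Real.sqrt ((Real.cosh (ρ₀ + 0 * p) * Real.cosh (ρ₀ + 0 * q) -
        Real.sinh (ρ₀ + 0 * p) * Real.sinh (ρ₀ + 0 * q) * c) ^ 2 - 1) *
        (Real.sinh ρ₀ * Real.cosh ρ₀ * (1 - c) * (p + q))) 0 := hcomp
  convert hcomp' using 1
  simp only [zero_mul, add_zero]
  rw [Kc]
  ring

/-- translation invariance of the Fourier integrand when `k·s ∈ 2πℤ`. -/
lemma integral_translate (ρ₁ : ℝ → ℝ) (hc : Continuous ρ₁)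
    (hper : Function.Periodic ρ₁ (2 * π)) (k : ℤ) (s : ℝ) (l : ℤ)
    (hl : (k : ℝ) * s = (l : ℝ) * (2 * π)) :
    (∫ θ in (0:ℝ)..(2*π), ((ρ₁ (θ + s) : ℝ) : ℂ) * Complex.exp (-Complex.I * (k:ℂ) * (θ:ℂ)))
      = ∫ θ in (0:ℝ)..(2*π), ((ρ₁ θ : ℝ) : ℂ) * Complex.exp (-Complex.I * (k:ℂ) * (θ:ℂ)) := by
  set F : ℝ → ℂ := fun u => ((ρ₁ u : ℝ) : ℂ) * Complex.exp (-Complex.I * (k:ℂ) * (u:ℂ)) with hF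
  have hexpper : ∀ u d : ℝ, ((k:ℝ) * d = 0 ∨ ∃ l' : ℤ, (k:ℝ) * d = (l' : ℝ) * (2*π)) →
      True := fun _ _ _ => trivial
  have hexp1 : ∀ (l' : ℤ) (d : ℝ), (k : ℝ) * d = (l' : ℝ) * (2 * π) →
      Complex.exp (-Complex.I * (k:ℂ) * (d:ℂ)) = 1 := by
    intro l' d hd
    have h3 : (k : ℂ) * (d : ℂ) = (l' : ℂ) * (2 * (π:ℂ)) := by exact_mod_cast hd
    have h4 : -Complex.I * (k:ℂ) * (d:ℂ) = ((-l' : ℤ) : ℂ) * (2 * (π:ℂ) * Complex.I) := by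
      push_cast
      linear_combination (-Complex.I) * h3
    rw [h4, Complex.exp_int_mul_two_pi_mul_I]
  have hFper : Function.Periodic F (2 * π) := by
    intro u
    have h1 : ρ₁ (u + 2 * π) = ρ₁ u := hper u
    have h2 : Complex.exp (-Complex.I * (k:ℂ) * (((u + 2*π) : ℝ) : ℂ))
        = Complex.exp (-Complex.I * (k:ℂ) * (u:ℂ)) := by
      have hsplit : (-Complex.I * (k:ℂ) * (((u + 2*π) : ℝ) : ℂ))
          = -Complex.I * (k:ℂ) * (u:ℂ) + -Complex.I * (k:ℂ) * (((2*π : ℝ)) : ℂ) := by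
        push_cast; ring
      rw [hsplit, Complex.exp_add, hexp1 k (2*π) (by ring), mul_one]
    show ((ρ₁ (u + 2*π) : ℝ) : ℂ) * Complex.exp (-Complex.I * (k:ℂ) * (((u + 2*π):ℝ):ℂ)) = F u
    rw [h1, h2]
  have hexps : ∀ θ : ℝ, ((ρ₁ (θ + s) : ℝ) : ℂ) * Complex.exp (-Complex.I * (k:ℂ) * (θ:ℂ))
      = F (θ + s) := by
    intro θ
    have h2 : Complex.exp (-Complex.I * (k:ℂ) * (((θ + s):ℝ):ℂ))
        = Complex.exp (-Complex.I * (k:ℂ) * (θ:ℂ)) := by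
      have hsplit : (-Complex.I * (k:ℂ) * (((θ + s) : ℝ) : ℂ))
          = -Complex.I * (k:ℂ) * (θ:ℂ) + -Complex.I * (k:ℂ) * ((s : ℝ) : ℂ) := by
        push_cast; ring
      rw [hsplit, Complex.exp_add, hexp1 l s hl, mul_one]
    show _ = ((ρ₁ (θ + s) : ℝ) : ℂ) * Complex.exp (-Complex.I * (k:ℂ) * (((θ + s):ℝ):ℂ))
    rw [h2]
  have hcong : Set.EqOn (fun θ : ℝ => ((ρ₁ (θ + s) : ℝ) : ℂ) * Complex.exp (-Complex.I * (k:ℂ) * (θ:ℂ)))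
      (fun θ : ℝ => F (θ + s)) (Set.uIcc 0 (2*π)) := fun θ _ => hexps θ
  rw [intervalIntegral.integral_congr hcong, intervalIntegral.integral_comp_add_right F s,
    zero_add, add_comm (2*π) s, hFper.intervalIntegral_add_eq s 0, zero_add]

lemma integral_exp_zero (k : ℤ) (hk : k ≠ 0) :
    (∫ θ in (0:ℝ)..(2*π), Complex.exp (-Complex.I * (k:ℂ) * (θ:ℂ))) = 0 := by
  have hc' : (-Complex.I * (k:ℂ)) ≠ 0 :=
    mul_ne_zero (neg_ne_zero.2 Complex.I_ne_zero) (Int.cast_ne_zero.2 hk)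
  rw [integral_exp_mul_complex hc']
  have h2 : Complex.exp (-Complex.I * (k:ℂ) * (((2*π : ℝ)) : ℂ)) = 1 := by
    rw [← Complex.exp_int_mul_two_pi_mul_I (-k)]
    congr 1
    push_cast
    ring
  rw [h2]
  norm_num

/-- **Break-up criterion on the hyperbolic plane.** For `ρ₀ > 0`, integers `0 < m < n`,
`n ≥ 2`, `gcd(m,n) = 1`, and a continuous `2π`-periodic `ρ₁ : ℝ → ℝ`, let `M(θ)` be the
derivative at `ε = 0` of the total hyperbolic length of the `(m,n)`-polygon inscribed in
the perturbed geodesic circle `ρ₀ + ερ₁` with impact angles `θ_j = θ + 2πmj/n`. If `ρ₁`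
has a nonzero Fourier coefficient at some nonzero frequency `k` divisible by `n`, then `M`
is not constant. -/
theorem hyperbolic_melnikov_not_constant (ρ₀ : ℝ) (hρ : 0 < ρ₀)
    (n : ℕ) (hn : 2 ≤ n) (m : ℤ) (hm : 0 < m) (hmn : m < (n : ℤ))
    (hgcd : Int.gcd m (n : ℤ) = 1)
    (ρ₁ : ℝ → ℝ) (hc : Continuous ρ₁) (hper : Function.Periodic ρ₁ (2 * π))
    (M : ℝ → ℝ)
    (hM : ∀ θ : ℝ, M θ =
      deriv (fun ε : ℝ => ∑ j ∈ Finset.range n,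
        _root_.arcosh (cosh (ρ₀ + ε * ρ₁ (θ + 2 * π * m * j / n)) *
            cosh (ρ₀ + ε * ρ₁ (θ + 2 * π * m * (j + 1) / n)) -
          sinh (ρ₀ + ε * ρ₁ (θ + 2 * π * m * j / n)) *
            sinh (ρ₀ + ε * ρ₁ (θ + 2 * π * m * (j + 1) / n)) * cos (2 * π * m / n))) 0)
    (h : ∃ k : ℤ, k ≠ 0 ∧ (n : ℤ) ∣ k ∧
      fourierCoeff2pi (fun θ => ((ρ₁ θ : ℝ) : ℂ)) k ≠ 0) :
    ¬ ∃ c : ℝ, ∀ θ : ℝ, M θ = c := by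
  obtain ⟨k, hk0, hkn, hkc⟩ := h
  rintro ⟨C, hconst⟩
  have hπ : (0:ℝ) < π := Real.pi_pos
  have hnpos : 0 < n := by omega
  have hn0 : (0:ℝ) < (n:ℝ) := by exact_mod_cast hnpos
  have hnZ : (0:ℤ) < (n:ℤ) := by exact_mod_cast hnpos
  -- the cosine is < 1
  have hcosne : cos (2 * π * m / n) ≠ 1 := by
    intro hone
    obtain ⟨l, hl⟩ := (Real.cos_eq_one_iff _).1 hone
    have h2 : (l:ℝ) * (2*π) * n = 2 * π * m / n * n := by rw [hl]
    rw [div_mul_cancel₀ _ (ne_of_gt hn0)] at h2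
    have h3 : (2*π) * ((l:ℝ) * n) = (2*π) * (m:ℝ) := by linear_combination h2
    have h4 : (l:ℝ) * n = (m:ℝ) := mul_left_cancel₀ (by positivity) h3
    have h5 : l * (n:ℤ) = m := by exact_mod_cast h4
    rcases le_or_gt l 0 with hl' | hl'
    · nlinarith [h5, hm, hl', hnZ]
    · have hl1 : (1:ℤ) ≤ l := hl'
      nlinarith [h5, hmn, hnZ, hl1]
  have hcos : cos (2 * π * m / n) < 1 := lt_of_le_of_ne (Real.cos_le_one _) hcosne
  have hK : 0 < Kc ρ₀ (cos (2 * π * m / n)) := Kc_pos hρ hcos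
  -- Melnikov function in closed form
  have hMS : ∀ θ : ℝ, M θ = 2 * Kc ρ₀ (cos (2 * π * m / n)) *
      ∑ j ∈ Finset.range n, ρ₁ (θ + 2 * π * m * j / n) := by
    intro θ
    have hterm : ∀ j ∈ Finset.range n, HasDerivAt (fun ε : ℝ =>
        _root_.arcosh (cosh (ρ₀ + ε * ρ₁ (θ + 2 * π * m * j / n)) *
            cosh (ρ₀ + ε * ρ₁ (θ + 2 * π * m * (j + 1) / n)) -
          sinh (ρ₀ + ε * ρ₁ (θ + 2 * π * m * j / n)) *
            sinh (ρ₀ + ε * ρ₁ (θ + 2 * π * m * (j + 1) / n)) * cos (2 * π * m / n)))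
        (Kc ρ₀ (cos (2 * π * m / n)) *
          (ρ₁ (θ + 2 * π * m * j / n) + ρ₁ (θ + 2 * π * m * (j + 1) / n))) 0 := by
      intro j _
      exact term_hasDerivAt_s12 ρ₀ (ρ₁ (θ + 2 * π * m * j / n))
        (ρ₁ (θ + 2 * π * m * (j + 1) / n)) (cos (2 * π * m / n)) hρ hcos
    have hd : deriv (fun ε : ℝ => ∑ j ∈ Finset.range n,
        _root_.arcosh (cosh (ρ₀ + ε * ρ₁ (θ + 2 * π * m * j / n)) *
            cosh (ρ₀ + ε * ρ₁ (θ + 2 * π * m * (j + 1) / n)) -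
          sinh (ρ₀ + ε * ρ₁ (θ + 2 * π * m * j / n)) *
            sinh (ρ₀ + ε * ρ₁ (θ + 2 * π * m * (j + 1) / n)) * cos (2 * π * m / n))) 0
        = ∑ j ∈ Finset.range n, Kc ρ₀ (cos (2 * π * m / n)) *
          (ρ₁ (θ + 2 * π * m * j / n) + ρ₁ (θ + 2 * π * m * (j + 1) / n)) :=
      (HasDerivAt.fun_sum hterm).deriv
    rw [hM θ, hd]
    -- now reindex the shifted sum
    have hcast : ∀ j : ℕ, θ + 2 * π * (m:ℝ) * ((j:ℝ) + 1) / n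
        = θ + 2 * π * (m:ℝ) * ((j+1 : ℕ) : ℝ) / n := by
      intro j; push_cast; ring
    have hshift : ∑ j ∈ Finset.range n, ρ₁ (θ + 2 * π * (m:ℝ) * ((j+1 : ℕ) : ℝ) / n)
        = ∑ j ∈ Finset.range n, ρ₁ (θ + 2 * π * (m:ℝ) * (j:ℝ) / n) := by
      set f : ℕ → ℝ := fun i => ρ₁ (θ + 2 * π * (m:ℝ) * (i:ℝ) / n) with hf
      have h1 := Finset.sum_range_succ' f n
      have h2 := Finset.sum_range_succ f n
      have h3 : f n = f 0 := by
        have ha : θ + 2 * π * (m:ℝ) * (n:ℝ) / n = θ + (m:ℝ) * (2 * π) := by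
          field_simp
        have hb : θ + 2 * π * (m:ℝ) * ((0:ℕ):ℝ) / n = θ := by push_cast; ring
        rw [hf]
        simp only
        rw [ha, hb, (hper.int_mul m) θ]
      have : ∑ i ∈ Finset.range n, f (i + 1) = ∑ i ∈ Finset.range n, f i := by
        linarith [h1, h2, h3]
      exact this
    simp only [hcast]
    rw [Finset.sum_congr rfl (fun j _ => mul_add (Kc ρ₀ (cos (2 * π * m / n))) _ _),
      Finset.sum_add_distrib, ← Finset.mul_sum, ← Finset.mul_sum, hshift]
    ring
  -- the inner sum is constant
  have hSconst : ∀ θ : ℝ, ∑ j ∈ Finset.range n, ρ₁ (θ + 2 * π * m * j / n)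
      = C / (2 * Kc ρ₀ (cos (2 * π * m / n))) := by
    intro θ
    have h1 := hconst θ
    rw [hMS θ] at h1
    rw [eq_div_iff (by positivity)]
    linear_combination h1
  -- Fourier coefficient of the sum function, computed two ways
  set G : ℝ → ℂ := fun θ => ((∑ j ∈ Finset.range n, ρ₁ (θ + 2 * π * m * j / n) : ℝ) : ℂ) with hG
  have hzero : fourierCoeff2pi G k = 0 := by
    rw [fourierCoeff2pi]
    have hcong : Set.EqOn (fun θ : ℝ => G θ * Complex.exp (-Complex.I * (k:ℂ) * (θ:ℂ)))
        (fun θ : ℝ => ((C / (2 * Kc ρ₀ (cos (2 * π * m / n))) : ℝ) : ℂ) *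
          Complex.exp (-Complex.I * (k:ℂ) * (θ:ℂ))) (Set.uIcc 0 (2*π)) := by
      intro θ _
      simp only [hG, hSconst θ]
    rw [intervalIntegral.integral_congr hcong, intervalIntegral.integral_const_mul,
      integral_exp_zero k hk0, mul_zero, mul_zero]
  have hecont : Continuous (fun θ : ℝ => Complex.exp (-Complex.I * (k:ℂ) * (θ:ℂ))) :=
    Complex.continuous_exp.comp (continuous_const.mul Complex.continuous_ofReal)
  obtain ⟨t, ht⟩ := hkn
  have hsum : fourierCoeff2pi G k
      = (n : ℂ) * fourierCoeff2pi (fun θ => ((ρ₁ θ : ℝ) : ℂ)) k := by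
    rw [fourierCoeff2pi, fourierCoeff2pi]
    have key : (∫ θ in (0:ℝ)..(2*π), G θ * Complex.exp (-Complex.I * (k:ℂ) * (θ:ℂ)))
        = (n : ℂ) * ∫ θ in (0:ℝ)..(2*π), ((ρ₁ θ : ℝ) : ℂ) *
          Complex.exp (-Complex.I * (k:ℂ) * (θ:ℂ)) := by
      have hpt : Set.EqOn (fun θ : ℝ => G θ * Complex.exp (-Complex.I * (k:ℂ) * (θ:ℂ)))
          (fun θ : ℝ => ∑ j ∈ Finset.range n, ((ρ₁ (θ + 2 * π * (m:ℝ) * (j:ℝ) / n) : ℝ) : ℂ) *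
            Complex.exp (-Complex.I * (k:ℂ) * (θ:ℂ))) (Set.uIcc 0 (2*π)) := by
        intro θ _
        simp only [hG]
        push_cast
        rw [Finset.sum_mul]
      rw [intervalIntegral.integral_congr hpt, intervalIntegral.integral_finset_sum]
      · have heach : ∀ j ∈ Finset.range n,
            (∫ θ in (0:ℝ)..(2*π), ((ρ₁ (θ + 2 * π * (m:ℝ) * (j:ℝ) / n) : ℝ) : ℂ) *
              Complex.exp (-Complex.I * (k:ℂ) * (θ:ℂ)))
            = ∫ θ in (0:ℝ)..(2*π), ((ρ₁ θ : ℝ) : ℂ) *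
              Complex.exp (-Complex.I * (k:ℂ) * (θ:ℂ)) := by
          intro j _
          apply integral_translate ρ₁ hc hper k (2 * π * (m:ℝ) * (j:ℝ) / n) (t * m * j)
          rw [ht]
          push_cast
          field_simp
        rw [Finset.sum_congr rfl heach, Finset.sum_const, Finset.card_range, nsmul_eq_mul]
      · intro j _
        apply Continuous.intervalIntegrable
        exact (Complex.continuous_ofReal.comp (hc.comp
          (continuous_id.add continuous_const))).mul hecont
    rw [key]
    ring
  rw [hzero] at hsum
  have hnC : (n : ℂ) ≠ 0 := by exact_mod_cast (Nat.cast_ne_zero (R := ℂ)).2 (by omega)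
  exact hkc (by
    have := hsum.symm
    rcases mul_eq_zero.1 this with h' | h'
    · exact absurd h' hnC
    · exact h')
end

section
/- Let ρ₀ > 0, let n ≥ 2 and m be integers with 0 < m < n and gcd(m,n) = 1, and let ρ₁ : ℝ → ℝ be continuous and 2π-periodic. For θ ∈ ℝ set θ_j = θ + 2πmj/n and define M(θ) as the derivative at ε = 0 of ε ↦ ∑_{j=0}^{n-1} √( (ρ₀+ερ₁(θ_j))² + (ρ₀+ερ₁(θ_{j+1}))² − 2(ρ₀+ερ₁(θ_j))(ρ₀+ερ₁(θ_{j+1}))·cos(2πm/n) ). If there exists k ∈ ℤ with k ≠ 0, n ∣ k, and the k-th Fourier coefficient of ρ₁ nonzero, then M is not constant on ℝ. -/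
open Real

lemma aux_hasDerivAt (ρ₀ c a b : ℝ) (hρ : 0 < ρ₀) (hc1 : c < 1) :
    HasDerivAt (fun ε : ℝ => Real.sqrt ((ρ₀ + ε * a) ^ 2 + (ρ₀ + ε * b) ^ 2 -
        2 * (ρ₀ + ε * a) * (ρ₀ + ε * b) * c))
      (ρ₀ * (1 - c) / Real.sqrt (2 * ρ₀ ^ 2 * (1 - c)) * (a + b)) 0 := by
  have h1 : HasDerivAt (fun ε : ℝ => ρ₀ + ε * a) a 0 := by
    simpa using ((hasDerivAt_id (0:ℝ)).mul_const a).const_add ρ₀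
  have h2 : HasDerivAt (fun ε : ℝ => ρ₀ + ε * b) b 0 := by
    simpa using ((hasDerivAt_id (0:ℝ)).mul_const b).const_add ρ₀
  have hg : HasDerivAt (fun ε : ℝ => (ρ₀ + ε * a) ^ 2 + (ρ₀ + ε * b) ^ 2 -
      2 * (ρ₀ + ε * a) * (ρ₀ + ε * b) * c)
      (2 * ρ₀ * (a + b) * (1 - c)) 0 := by
    have := ((h1.pow 2).add (h2.pow 2)).sub
      (((h1.const_mul 2).mul h2).mul_const c)
    refine this.congr_deriv ?_
    simp
    ring
  have hval : (2 : ℝ) * ρ₀ ^ 2 * (1 - c) =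
      (ρ₀ + 0 * a) ^ 2 + (ρ₀ + 0 * b) ^ 2 - 2 * (ρ₀ + 0 * a) * (ρ₀ + 0 * b) * c := by ring
  have hpos : 0 < 2 * ρ₀ ^ 2 * (1 - c) := mul_pos (by positivity) (sub_pos.mpr hc1)
  have hL : 0 < Real.sqrt (2 * ρ₀ ^ 2 * (1 - c)) := Real.sqrt_pos.mpr hpos
  have hs := (Real.hasDerivAt_sqrt (x := (ρ₀ + 0 * a) ^ 2 + (ρ₀ + 0 * b) ^ 2 -
      2 * (ρ₀ + 0 * a) * (ρ₀ + 0 * b) * c) (by rw [← hval]; exact hpos.ne')).comp 0 hg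
  refine hs.congr_deriv ?_
  rw [← hval]
  field_simp

lemma aux_shift (ρ₁ : ℝ → ℝ) (hper : Function.Periodic ρ₁ (2*π))
    (k : ℤ) (s : ℝ) (hs : Complex.exp (-Complex.I * k * s) = 1) :
    (∫ θ in (0:ℝ)..(2*π), ((ρ₁ (θ + s) : ℝ):ℂ) * Complex.exp (-Complex.I * k * θ))
      = ∫ θ in (0:ℝ)..(2*π), ((ρ₁ θ : ℝ):ℂ) * Complex.exp (-Complex.I * k * θ) := by
  set F : ℝ → ℂ := fun u => ((ρ₁ u : ℝ):ℂ) * Complex.exp (-Complex.I * k * u) with hF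
  have hFper : Function.Periodic F (2*π) := by
    intro u
    simp only [hF, hper u]
    congr 1
    rw [show (-Complex.I * k * ((u + 2*π : ℝ):ℂ)) =
        -Complex.I * k * u + (-k : ℤ) * (2*(π:ℂ)*Complex.I) by push_cast; ring,
      Complex.exp_add, Complex.exp_int_mul_two_pi_mul_I, mul_one]
  have heq : ∀ θ : ℝ, ((ρ₁ (θ+s) : ℝ):ℂ) * Complex.exp (-Complex.I * k * θ) = F (θ + s) := by
    intro θ
    simp only [hF]
    congr 1
    rw [show -Complex.I * k * ((θ + s : ℝ):ℂ) = -Complex.I*k*θ + -Complex.I*k*s by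
      push_cast; ring, Complex.exp_add, hs, mul_one]
  rw [intervalIntegral.integral_congr (g := fun θ => F (θ + s)) (fun θ _ => heq θ)]
  rw [intervalIntegral.integral_comp_add_right F s, zero_add]
  have := hFper.intervalIntegral_add_eq s 0
  simpa [add_comm] using this

lemma aux_const (k : ℤ) (hk : k ≠ 0) (c : ℂ) :
    (∫ θ in (0:ℝ)..(2*π), c * Complex.exp (-Complex.I * k * θ)) = 0 := by
  have hne : (-Complex.I * k : ℂ) ≠ 0 := by
    simp [Complex.I_ne_zero, Complex.ext_iff]
    exact_mod_cast hk
  rw [intervalIntegral.integral_const_mul]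
  have : (∫ θ in (0:ℝ)..(2*π), Complex.exp ((-Complex.I * k) * θ)) =
      (Complex.exp ((-Complex.I*k) * (2*π:ℝ)) - Complex.exp ((-Complex.I*k) * (0:ℝ))) /
        (-Complex.I*k) := integral_exp_mul_complex hne
  rw [show ∀ θ:ℝ, -Complex.I * k * θ = (-Complex.I*k) * θ from fun _ => rfl] at *
  have h1 : Complex.exp ((-Complex.I*k) * ((2*π:ℝ):ℂ)) = 1 := by
    rw [show (-Complex.I*k) * ((2*π:ℝ):ℂ) = (-k : ℤ) * (2*(π:ℂ)*Complex.I) by push_cast; ring]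
    exact Complex.exp_int_mul_two_pi_mul_I _
  rw [this, h1]
  norm_num

/-- **Planar break-up criterion (Ramírez-Ros).** For `ρ₀ > 0`, integers `0 < m < n`,
`n ≥ 2`, `gcd(m,n) = 1`, and a continuous `2π`-periodic `ρ₁ : ℝ → ℝ`, let `M(θ)` be the
derivative at `ε = 0` of the total length of the `(m,n)`-polygon inscribed in the perturbed
circle `ρ₀ + ερ₁` with impact angles `θ_j = θ + 2πmj/n`. If `ρ₁` has a nonzero Fourier
coefficient at some nonzero frequency `k` divisible by `n`, then `M` is not constant. -/
theorem euclidean_melnikov_not_constant (ρ₀ : ℝ) (hρ : 0 < ρ₀)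
    (n : ℕ) (hn : 2 ≤ n) (m : ℤ) (hm : 0 < m) (hmn : m < (n : ℤ))
    (hgcd : Int.gcd m (n : ℤ) = 1)
    (ρ₁ : ℝ → ℝ) (hc : Continuous ρ₁) (hper : Function.Periodic ρ₁ (2 * π))
    (M : ℝ → ℝ)
    (hM : ∀ θ : ℝ, M θ =
      deriv (fun ε : ℝ => ∑ j ∈ Finset.range n,
        Real.sqrt ((ρ₀ + ε * ρ₁ (θ + 2 * π * m * j / n)) ^ 2 +
          (ρ₀ + ε * ρ₁ (θ + 2 * π * m * (j + 1) / n)) ^ 2 -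
          2 * (ρ₀ + ε * ρ₁ (θ + 2 * π * m * j / n)) *
            (ρ₀ + ε * ρ₁ (θ + 2 * π * m * (j + 1) / n)) * cos (2 * π * m / n))) 0)
    (h : ∃ k : ℤ, k ≠ 0 ∧ (n : ℤ) ∣ k ∧
      fourierCoeff2pi (fun θ => ((ρ₁ θ : ℝ) : ℂ)) k ≠ 0) :
    ¬ ∃ c : ℝ, ∀ θ : ℝ, M θ = c := by
  have hnR : (0:ℝ) < n := by exact_mod_cast lt_of_lt_of_le two_pos hn
  have hnne : (n:ℝ) ≠ 0 := hnR.ne'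
  set α : ℝ := 2 * π * m / n with hαdef
  have hα0 : 0 < α := by
    have hmR : (0:ℝ) < (m:ℝ) := by exact_mod_cast hm
    rw [hαdef]; positivity
  have hα2 : α < 2 * π := by
    rw [hαdef, div_lt_iff₀ hnR]
    have hmR : (m:ℝ) < (n:ℝ) := by exact_mod_cast hmn
    have := Real.pi_pos
    nlinarith
  have hcos : cos α < 1 := by
    have hs2 : 0 < Real.sin (α/2) :=
      Real.sin_pos_of_pos_of_lt_pi (by linarith) (by linarith)
    rw [show α = 2*(α/2) by ring, Real.cos_two_mul]
    nlinarith [Real.sin_sq_add_cos_sq (α/2), pow_pos hs2 2]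
  set C : ℝ := ρ₀ * (1 - cos α) / Real.sqrt (2 * ρ₀ ^ 2 * (1 - cos α)) with hCdef
  have hC : 0 < C := by
    have hpos : 0 < 2 * ρ₀ ^ 2 * (1 - cos α) := mul_pos (by positivity) (by linarith)
    have := Real.sqrt_pos.mpr hpos
    rw [hCdef]
    have h1 : 0 < ρ₀ * (1 - cos α) := mul_pos hρ (by linarith)
    positivity
  set S : ℝ → ℝ := fun θ => ∑ j ∈ Finset.range n, ρ₁ (θ + 2 * π * m * j / n) with hSdef
  -- shifted sum equals S
  have hshift : ∀ θ : ℝ, ∑ j ∈ Finset.range n, ρ₁ (θ + 2 * π * m * (j + 1) / n) = S θ := by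
    intro θ
    set f : ℕ → ℝ := fun j => ρ₁ (θ + 2 * π * m * j / n) with hfdef
    have h1 : ∑ j ∈ Finset.range (n+1), f j = (∑ j ∈ Finset.range n, f (j+1)) + f 0 :=
      Finset.sum_range_succ' f n
    have h2 : ∑ j ∈ Finset.range (n+1), f j = (∑ j ∈ Finset.range n, f j) + f n :=
      Finset.sum_range_succ f n
    have hfn : f n = f 0 := by
      simp only [hfdef]
      rw [show θ + 2 * π * m * (n:ℕ) / n = (θ + 2 * π * m * (0:ℕ)/n) + (m:ℤ) * (2*π) by
        push_cast; field_simp; ring]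
      exact (hper.int_mul m) _
    have hcast : ∑ j ∈ Finset.range n, ρ₁ (θ + 2 * π * m * (j + 1) / n)
        = ∑ j ∈ Finset.range n, f (j+1) := by
      apply Finset.sum_congr rfl
      intro j _
      simp only [hfdef]
      norm_num
    rw [hcast, hSdef]
    have : (∑ j ∈ Finset.range n, f (j+1)) + f 0 = (∑ j ∈ Finset.range n, f j) + f n := by
      rw [← h1, h2]
    simp only [hfn] at this
    exact add_right_cancel this
  -- M equals 2 C S
  have hMform : ∀ θ : ℝ, M θ = 2 * C * S θ := by
    intro θ
    have hder : HasDerivAt (fun ε : ℝ => ∑ j ∈ Finset.range n,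
        Real.sqrt ((ρ₀ + ε * ρ₁ (θ + 2 * π * m * j / n)) ^ 2 +
          (ρ₀ + ε * ρ₁ (θ + 2 * π * m * (j + 1) / n)) ^ 2 -
          2 * (ρ₀ + ε * ρ₁ (θ + 2 * π * m * j / n)) *
            (ρ₀ + ε * ρ₁ (θ + 2 * π * m * (j + 1) / n)) * cos (2 * π * m / n)))
        (∑ j ∈ Finset.range n, C * (ρ₁ (θ + 2 * π * m * j / n) +
          ρ₁ (θ + 2 * π * m * (j + 1) / n))) 0 :=
      HasDerivAt.fun_sum fun j _ =>
        aux_hasDerivAt ρ₀ (cos α) (ρ₁ (θ + 2 * π * m * j / n))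
          (ρ₁ (θ + 2 * π * m * (j + 1) / n)) hρ hcos
    rw [hM θ, hder.deriv]
    rw [Finset.sum_congr rfl (fun j _ => mul_add C _ _), Finset.sum_add_distrib,
      ← Finset.mul_sum, ← Finset.mul_sum, hshift θ]
    rw [hSdef]
    ring
  -- suppose M constant
  rintro ⟨cst, hcst⟩
  obtain ⟨k, hk0, ⟨t, ht⟩, hck⟩ := h
  -- S is constant
  have hSconst : ∀ θ : ℝ, S θ = cst / (2 * C) := by
    intro θ
    have := hcst θ
    rw [hMform θ] at this
    field_simp at this ⊢
    linarith
  have hnC : (n:ℂ) ≠ 0 := by exact_mod_cast (by omega : n ≠ 0)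
  -- exp factor is 1 at each shift
  have hsj : ∀ j : ℕ, Complex.exp (-Complex.I * k * ((2 * π * m * j / n : ℝ):ℂ)) = 1 := by
    intro j
    rw [show -Complex.I * k * ((2 * π * m * j / n : ℝ):ℂ)
        = ((-(t * m * j) : ℤ):ℂ) * (2*(π:ℂ)*Complex.I) by
      rw [ht]; push_cast; field_simp]
    exact Complex.exp_int_mul_two_pi_mul_I _
  -- integral of S against exponential equals n times integral of ρ₁
  have hI : ∀ s : ℝ, IntervalIntegrable
      (fun θ : ℝ => ((ρ₁ (θ + s) : ℝ):ℂ) * Complex.exp (-Complex.I * k * θ))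
      MeasureTheory.volume 0 (2*π) := by
    intro s
    apply Continuous.intervalIntegrable
    fun_prop
  have hsum : (∫ θ in (0:ℝ)..(2*π), ((S θ : ℝ):ℂ) * Complex.exp (-Complex.I * k * θ))
      = (n : ℂ) * ∫ θ in (0:ℝ)..(2*π), ((ρ₁ θ : ℝ):ℂ) * Complex.exp (-Complex.I * k * θ) := by
    have hcongr : ∀ θ ∈ Set.uIcc (0:ℝ) (2*π),
        ((S θ : ℝ):ℂ) * Complex.exp (-Complex.I * k * θ)
        = ∑ j ∈ Finset.range n,
            ((ρ₁ (θ + 2 * π * m * j / n) : ℝ):ℂ) * Complex.exp (-Complex.I * k * θ) := by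
      intro θ _
      rw [hSdef]
      push_cast
      rw [Finset.sum_mul]
    rw [intervalIntegral.integral_congr hcongr,
      intervalIntegral.integral_finset_sum (μ := MeasureTheory.volume)
        (f := fun (j : ℕ) (θ : ℝ) => ((ρ₁ (θ + 2 * π * m * j / n) : ℝ):ℂ) *
          Complex.exp (-Complex.I * k * θ)) (fun j _ => hI (2 * π * m * j / n))]
    rw [Finset.sum_congr rfl (fun (j : ℕ) _ => aux_shift ρ₁ hper k (2 * π * (m:ℝ) * (j:ℕ) / (n:ℝ)) (hsj j))]
    rw [Finset.sum_const, Finset.card_range, nsmul_eq_mul]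
  -- but S is constant, so that integral vanishes
  have hzero : (∫ θ in (0:ℝ)..(2*π), ((S θ : ℝ):ℂ) * Complex.exp (-Complex.I * k * θ)) = 0 := by
    have : ∀ θ ∈ Set.uIcc (0:ℝ) (2*π),
        ((S θ : ℝ):ℂ) * Complex.exp (-Complex.I * k * θ)
        = ((cst / (2*C) : ℝ):ℂ) * Complex.exp (-Complex.I * k * θ) := by
      intro θ _; rw [hSconst θ]
    rw [intervalIntegral.integral_congr this]
    exact aux_const k hk0 _
  rw [hzero] at hsum
  have : (∫ θ in (0:ℝ)..(2*π), ((ρ₁ θ : ℝ):ℂ) * Complex.exp (-Complex.I * k * θ)) = 0 := by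
    rcases mul_eq_zero.mp hsum.symm with h' | h'
    · exact absurd h' hnC
    · exact h'
  apply hck
  unfold fourierCoeff2pi
  rw [this, mul_zero]
end

section
/- Let ρ₀ ∈ (0, π/2). For ψ ∈ (0, π/2), the quantity (cos²ρ₀ − tan²ψ)/(sec²ψ − sin²ρ₀) equals (cos²ρ₀ − tan²ψ)/(cos²ρ₀ + tan²ψ) and lies in the open interval (−1, 1); the function α(ψ) = arccos( (cos²ρ₀ − tan²ψ)/(sec²ψ − sin²ρ₀) ) is strictly increasing on (0, π/2) and maps (0, π/2) bijectively onto (0, π). In particular, for all integers 0 < m < n with 2m < n there exists a unique ψ^{m/n} ∈ (0, π/2) with α(ψ^{m/n}) = 2πm/n. -/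
open Real

/-- **Twist property of the spherical circular billiard.** For `ρ₀ ∈ (0, π/2)` and
`ψ ∈ (0, π/2)`: `(cos²ρ₀ − tan²ψ)/(sec²ψ − sin²ρ₀) = (cos²ρ₀ − tan²ψ)/(cos²ρ₀ + tan²ψ)`
lies in `(−1, 1)`; the polar-angle advance `α(ψ) = arccos((cos²ρ₀ − tan²ψ)/(sec²ψ − sin²ρ₀))`
is strictly increasing on `(0, π/2)` and maps it bijectively onto `(0, π)`; and for all
integers `0 < m < n` with `2m < n` there is a unique `ψ^{m/n} ∈ (0, π/2)` with
`α(ψ^{m/n}) = 2πm/n`. -/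
theorem spherical_twist (ρ₀ : ℝ) (hρ : ρ₀ ∈ Set.Ioo 0 (π / 2))
    (α : ℝ → ℝ)
    (hα : ∀ ψ : ℝ, α ψ =
      arccos ((cos ρ₀ ^ 2 - tan ψ ^ 2) / (1 / cos ψ ^ 2 - sin ρ₀ ^ 2))) :
    (∀ ψ ∈ Set.Ioo 0 (π / 2),
      (cos ρ₀ ^ 2 - tan ψ ^ 2) / (1 / cos ψ ^ 2 - sin ρ₀ ^ 2) =
        (cos ρ₀ ^ 2 - tan ψ ^ 2) / (cos ρ₀ ^ 2 + tan ψ ^ 2) ∧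
      (cos ρ₀ ^ 2 - tan ψ ^ 2) / (1 / cos ψ ^ 2 - sin ρ₀ ^ 2) ∈ Set.Ioo (-1 : ℝ) 1) ∧
    StrictMonoOn α (Set.Ioo 0 (π / 2)) ∧
    Set.BijOn α (Set.Ioo 0 (π / 2)) (Set.Ioo 0 π) ∧
    ∀ m n : ℤ, 0 < m → m < n → 2 * m < n →
      ∃! ψ : ℝ, ψ ∈ Set.Ioo 0 (π / 2) ∧ α ψ = 2 * π * m / n := by
  obtain ⟨hρ0, hρ2⟩ := hρ
  have hcρ : 0 < cos ρ₀ := Real.cos_pos_of_mem_Ioo ⟨by linarith [Real.pi_pos], hρ2⟩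
  have hc : 0 < cos ρ₀ ^ 2 := by positivity
  -- denominator identity
  have hden : ∀ ψ : ℝ, cos ψ ≠ 0 →
      1 / cos ψ ^ 2 - sin ρ₀ ^ 2 = cos ρ₀ ^ 2 + tan ψ ^ 2 := by
    intro ψ hψ
    rw [Real.tan_eq_sin_div_cos]
    have h1 := Real.sin_sq_add_cos_sq ψ
    have h2 := Real.sin_sq_add_cos_sq ρ₀
    field_simp
    nlinarith [sq_nonneg (cos ψ)]
  -- basic facts on (0, π/2)
  have htpos : ∀ ψ ∈ Set.Ioo 0 (π / 2), 0 < tan ψ := fun ψ hψ =>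
    Real.tan_pos_of_pos_of_lt_pi_div_two hψ.1 hψ.2
  have hcos : ∀ ψ ∈ Set.Ioo 0 (π / 2), 0 < cos ψ := fun ψ hψ =>
    Real.cos_pos_of_mem_Ioo ⟨by linarith [hψ.1, Real.pi_pos], hψ.2⟩
  -- the first bullet
  have hmain : ∀ ψ ∈ Set.Ioo 0 (π / 2),
      (cos ρ₀ ^ 2 - tan ψ ^ 2) / (1 / cos ψ ^ 2 - sin ρ₀ ^ 2) =
        (cos ρ₀ ^ 2 - tan ψ ^ 2) / (cos ρ₀ ^ 2 + tan ψ ^ 2) ∧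
      (cos ρ₀ ^ 2 - tan ψ ^ 2) / (1 / cos ψ ^ 2 - sin ρ₀ ^ 2) ∈ Set.Ioo (-1 : ℝ) 1 := by
    intro ψ hψ
    have hcψ := (hcos ψ hψ).ne'
    have ht := htpos ψ hψ
    have hd : 0 < cos ρ₀ ^ 2 + tan ψ ^ 2 := by positivity
    rw [hden ψ hcψ]
    refine ⟨rfl, ?_, ?_⟩
    · rw [lt_div_iff₀ hd]; nlinarith
    · rw [div_lt_one hd]; nlinarith
  -- value of α via ratio
  have hαval : ∀ ψ ∈ Set.Ioo 0 (π / 2),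
      α ψ = arccos ((cos ρ₀ ^ 2 - tan ψ ^ 2) / (cos ρ₀ ^ 2 + tan ψ ^ 2)) := by
    intro ψ hψ
    rw [hα ψ, hden ψ (hcos ψ hψ).ne']
  -- strict monotonicity
  have hmono : StrictMonoOn α (Set.Ioo 0 (π / 2)) := by
    intro x hx y hy hxy
    have htx := htpos x hx
    have hty := htpos y hy
    have htlt : tan x < tan y := by
      apply Real.strictMonoOn_tan ⟨by linarith [hx.1, Real.pi_pos], by linarith [hx.2]⟩
        ⟨by linarith [hy.1, Real.pi_pos], by linarith [hy.2]⟩ hxy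
    have ht2 : tan x ^ 2 < tan y ^ 2 := by nlinarith
    have hdx : 0 < cos ρ₀ ^ 2 + tan x ^ 2 := by positivity
    have hdy : 0 < cos ρ₀ ^ 2 + tan y ^ 2 := by positivity
    have hrlt : (cos ρ₀ ^ 2 - tan y ^ 2) / (cos ρ₀ ^ 2 + tan y ^ 2)
        < (cos ρ₀ ^ 2 - tan x ^ 2) / (cos ρ₀ ^ 2 + tan x ^ 2) := by
      rw [div_lt_div_iff₀ hdy hdx]; nlinarith
    rw [hαval x hx, hαval y hy]
    have hx1 := (hmain x hx).2
    have hy1 := (hmain y hy).2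
    rw [hden x (hcos x hx).ne'] at hx1
    rw [hden y (hcos y hy).ne'] at hy1
    exact Real.strictAntiOn_arccos ⟨hy1.1.le, hy1.2.le⟩ ⟨hx1.1.le, hx1.2.le⟩ hrlt
  -- maps into (0, π)
  have hmapsto : Set.MapsTo α (Set.Ioo 0 (π / 2)) (Set.Ioo 0 π) := by
    intro ψ hψ
    have h1 := (hmain ψ hψ).2
    rw [hα ψ]
    constructor
    · exact Real.arccos_pos.2 h1.2
    · refine lt_of_le_of_ne (Real.arccos_le_pi _) fun h => ?_
      have := Real.arccos_eq_pi.1 h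
      linarith [h1.1]
  -- surjectivity
  have hsurj : Set.SurjOn α (Set.Ioo 0 (π / 2)) (Set.Ioo 0 π) := by
    intro y hy
    obtain ⟨hy0, hyπ⟩ := hy
    set s := tan (y / 2) with hs
    have hy2 : y / 2 ∈ Set.Ioo 0 (π / 2) := ⟨by linarith, by linarith⟩
    have hspos : 0 < s := htpos _ hy2
    have hcy2 : 0 < cos (y / 2) := hcos _ hy2
    set ψ := arctan (cos ρ₀ * s) with hψdef
    have hψmem : ψ ∈ Set.Ioo 0 (π / 2) :=
      ⟨by simpa [hψdef] using Real.arctan_strictMono (show (0:ℝ) < cos ρ₀ * s by positivity),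
        Real.arctan_lt_pi_div_two _⟩
    refine ⟨ψ, hψmem, ?_⟩
    rw [hαval ψ hψmem, Real.tan_arctan]
    have hkey : (cos ρ₀ ^ 2 - (cos ρ₀ * s) ^ 2) / (cos ρ₀ ^ 2 + (cos ρ₀ * s) ^ 2)
        = cos y := by
      have hsq := Real.sin_sq_add_cos_sq (y / 2)
      have hcy : cos y = cos (y / 2) ^ 2 - sin (y / 2) ^ 2 := by
        have h2m := Real.cos_two_mul (y / 2)
        rw [show 2 * (y / 2) = y by ring] at h2m
        linarith
      have h1s : (0 : ℝ) < 1 + s ^ 2 := by positivity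
      have hstep : (cos ρ₀ ^ 2 - (cos ρ₀ * s) ^ 2) / (cos ρ₀ ^ 2 + (cos ρ₀ * s) ^ 2)
          = (1 - s ^ 2) / (1 + s ^ 2) := by
        rw [show cos ρ₀ ^ 2 - (cos ρ₀ * s) ^ 2 = cos ρ₀ ^ 2 * (1 - s ^ 2) by ring,
          show cos ρ₀ ^ 2 + (cos ρ₀ * s) ^ 2 = cos ρ₀ ^ 2 * (1 + s ^ 2) by ring,
          mul_div_mul_left _ _ hc.ne']
      rw [hstep, hs, Real.tan_eq_sin_div_cos, hcy]
      rw [div_eq_iff (by positivity)]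
      field_simp
      linear_combination (sin (y / 2) ^ 2 - cos (y / 2) ^ 2) * hsq
    rw [hkey, Real.arccos_cos hy0.le hyπ.le]
  have hbij : Set.BijOn α (Set.Ioo 0 (π / 2)) (Set.Ioo 0 π) :=
    ⟨hmapsto, hmono.injOn, hsurj⟩
  refine ⟨hmain, hmono, hbij, ?_⟩
  intro m n hm hmn h2mn
  have hn : (0 : ℝ) < (n : ℝ) := by exact_mod_cast lt_trans hm hmn
  have hmr : (0 : ℝ) < (m : ℝ) := by exact_mod_cast hm
  have h2mr : 2 * (m : ℝ) < (n : ℝ) := by exact_mod_cast h2mn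
  have hymem : 2 * π * m / n ∈ Set.Ioo 0 π := by
    constructor
    · positivity
    · rw [div_lt_iff₀ hn]
      nlinarith [Real.pi_pos]
  obtain ⟨ψ, hψmem, hψval⟩ := hsurj hymem
  exact ⟨ψ, ⟨hψmem, hψval⟩, fun z ⟨hz, hzval⟩ =>
    hbij.injOn hz hψmem (by rw [hzval, hψval])⟩
end

section
/- Let ρ₀ > 0. For ψ ∈ (0, π/2), the quantity (cosh²ρ₀ − tan²ψ)/(sec²ψ + sinh²ρ₀) equals (cosh²ρ₀ − tan²ψ)/(cosh²ρ₀ + tan²ψ) and lies in the open interval (−1, 1); the function α(ψ) = arccos( (cosh²ρ₀ − tan²ψ)/(sec²ψ + sinh²ρ₀) ) is strictly increasing on (0, π/2) and maps (0, π/2) bijectively onto (0, π). In particular, for all integers 0 < m < n with 2m < n there exists a unique ψ^{m/n} ∈ (0, π/2) with α(ψ^{m/n}) = 2πm/n. -/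
open Real

private lemma aux_arccos_lt_pi {x : ℝ} (h : -1 < x) : arccos x < π :=
  lt_of_le_of_ne (arccos_le_pi x) (fun he => absurd ((arccos_eq_pi).1 he) (not_le.2 h))

/-- **Twist property of the hyperbolic circular billiard.** For `ρ₀ > 0` and
`ψ ∈ (0, π/2)`: `(cosh²ρ₀ − tan²ψ)/(sec²ψ + sinh²ρ₀) = (cosh²ρ₀ − tan²ψ)/(cosh²ρ₀ + tan²ψ)`
lies in `(−1, 1)`; the polar-angle advance
`α(ψ) = arccos((cosh²ρ₀ − tan²ψ)/(sec²ψ + sinh²ρ₀))` is strictly increasing on `(0, π/2)`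
and maps it bijectively onto `(0, π)`; and for all integers `0 < m < n` with `2m < n` there
is a unique `ψ^{m/n} ∈ (0, π/2)` with `α(ψ^{m/n}) = 2πm/n`. -/
theorem hyperbolic_twist (ρ₀ : ℝ) (hρ : 0 < ρ₀)
    (α : ℝ → ℝ)
    (hα : ∀ ψ : ℝ, α ψ =
      arccos ((cosh ρ₀ ^ 2 - tan ψ ^ 2) / (1 / cos ψ ^ 2 + sinh ρ₀ ^ 2))) :
    (∀ ψ ∈ Set.Ioo 0 (π / 2),
      (cosh ρ₀ ^ 2 - tan ψ ^ 2) / (1 / cos ψ ^ 2 + sinh ρ₀ ^ 2) =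
        (cosh ρ₀ ^ 2 - tan ψ ^ 2) / (cosh ρ₀ ^ 2 + tan ψ ^ 2) ∧
      (cosh ρ₀ ^ 2 - tan ψ ^ 2) / (1 / cos ψ ^ 2 + sinh ρ₀ ^ 2) ∈ Set.Ioo (-1 : ℝ) 1) ∧
    StrictMonoOn α (Set.Ioo 0 (π / 2)) ∧
    Set.BijOn α (Set.Ioo 0 (π / 2)) (Set.Ioo 0 π) ∧
    ∀ m n : ℤ, 0 < m → m < n → 2 * m < n →
      ∃! ψ : ℝ, ψ ∈ Set.Ioo 0 (π / 2) ∧ α ψ = 2 * π * m / n := by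
  set c : ℝ := cosh ρ₀ ^ 2 with hc
  have hc1 : 1 < c := by
    have := (Real.one_lt_cosh.2 hρ.ne')
    nlinarith
  clear_value c
  -- denominators agree
  have hden : ∀ ψ ∈ Set.Ioo 0 (π / 2),
      1 / cos ψ ^ 2 + sinh ρ₀ ^ 2 = c + tan ψ ^ 2 := by
    intro ψ hψ
    have hcos : 0 < cos ψ :=
      Real.cos_pos_of_mem_Ioo ⟨by linarith [hψ.1, Real.pi_pos], hψ.2⟩
    have h1 : (1 : ℝ) / cos ψ ^ 2 = 1 + tan ψ ^ 2 := by
      rw [one_div, ← Real.inv_one_add_tan_sq hcos.ne', inv_inv]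
    rw [h1, hc, Real.cosh_sq]
    ring
  have htanpos : ∀ ψ ∈ Set.Ioo 0 (π / 2), 0 < tan ψ := fun ψ hψ =>
    Real.tan_pos_of_pos_of_lt_pi_div_two hψ.1 hψ.2
  have hbound : ∀ t : ℝ, 0 < t → (c - t) / (c + t) ∈ Set.Ioo (-1 : ℝ) 1 := by
    intro t ht
    have hct : 0 < c + t := by linarith
    constructor
    · rw [lt_div_iff₀ hct]; nlinarith
    · rw [div_lt_one hct]; linarith
  have hfirst : ∀ ψ ∈ Set.Ioo 0 (π / 2),
      (c - tan ψ ^ 2) / (1 / cos ψ ^ 2 + sinh ρ₀ ^ 2) =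
        (c - tan ψ ^ 2) / (c + tan ψ ^ 2) ∧
      (c - tan ψ ^ 2) / (1 / cos ψ ^ 2 + sinh ρ₀ ^ 2) ∈ Set.Ioo (-1 : ℝ) 1 := by
    intro ψ hψ
    have := hden ψ hψ
    rw [this]
    exact ⟨rfl, hbound _ (pow_pos (htanpos ψ hψ) 2)⟩
  -- rewrite α
  have hα' : ∀ ψ ∈ Set.Ioo 0 (π / 2),
      α ψ = arccos ((c - tan ψ ^ 2) / (c + tan ψ ^ 2)) := by
    intro ψ hψ
    rw [hα ψ, hden ψ hψ]
  have hmono : StrictMonoOn α (Set.Ioo 0 (π / 2)) := by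
    intro x hx y hy hxy
    rw [hα' x hx, hα' y hy]
    have htx := htanpos x hx
    have hty := htanpos y hy
    have htlt : tan x < tan y :=
      Real.tan_lt_tan_of_nonneg_of_lt_pi_div_two hx.1.le hy.2 hxy
    have h2 : tan x ^ 2 < tan y ^ 2 := by nlinarith
    have hbx := hbound _ (pow_pos htx 2)
    have hby := hbound _ (pow_pos hty 2)
    have hgt : (c - tan y ^ 2) / (c + tan y ^ 2) < (c - tan x ^ 2) / (c + tan x ^ 2) := by
      rw [div_lt_div_iff₀ (by nlinarith) (by nlinarith)]
      nlinarith
    exact Real.strictAntiOn_arccos ⟨hby.1.le, hby.2.le⟩ ⟨hbx.1.le, hbx.2.le⟩ hgt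
  have hmaps : Set.MapsTo α (Set.Ioo 0 (π / 2)) (Set.Ioo 0 π) := by
    intro ψ hψ
    rw [hα' ψ hψ]
    have hb := hbound _ (pow_pos (htanpos ψ hψ) 2)
    exact ⟨Real.arccos_pos.2 hb.2, aux_arccos_lt_pi hb.1⟩
  have hsurj : Set.SurjOn α (Set.Ioo 0 (π / 2)) (Set.Ioo 0 π) := by
    intro y hy
    have hcy1 : cos y < 1 := by
      have := Real.strictAntiOn_cos ⟨le_refl 0, Real.pi_pos.le⟩ ⟨hy.1.le, hy.2.le⟩ hy.1
      simpa using this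
    have hcy2 : -1 < cos y := by
      have := Real.strictAntiOn_cos ⟨hy.1.le, hy.2.le⟩ ⟨Real.pi_pos.le, le_refl π⟩ hy.2
      simpa using this
    set t : ℝ := c * (1 - cos y) / (1 + cos y) with ht
    have h1c : 0 < 1 + cos y := by linarith
    have htpos : 0 < t := by
      apply div_pos (by nlinarith) h1c
    set ψ : ℝ := arctan (Real.sqrt t) with hψdef
    have hst : 0 < Real.sqrt t := Real.sqrt_pos.2 htpos
    have hψmem : ψ ∈ Set.Ioo 0 (π / 2) :=
      ⟨by rw [hψdef]; simpa using Real.arctan_strictMono hst, Real.arctan_lt_pi_div_two _⟩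
    refine ⟨ψ, hψmem, ?_⟩
    rw [hα' ψ hψmem]
    have htan : tan ψ ^ 2 = t := by
      rw [hψdef, Real.tan_arctan, Real.sq_sqrt htpos.le]
    rw [htan]
    have hct0 : (0:ℝ) < c := by linarith
    have hval : (c - t) / (c + t) = cos y := by
      rw [div_eq_iff (by positivity), ht]
      field_simp
      ring
    rw [hval, Real.arccos_cos hy.1.le hy.2.le]
  have hbij : Set.BijOn α (Set.Ioo 0 (π / 2)) (Set.Ioo 0 π) :=
    ⟨hmaps, hmono.injOn, hsurj⟩
  refine ⟨hfirst, hmono, hbij, ?_⟩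
  intro m n hm hmn h2mn
  have hn : (0 : ℝ) < (n : ℝ) := by exact_mod_cast lt_trans hm hmn
  have hm' : (0 : ℝ) < (m : ℝ) := by exact_mod_cast hm
  have hy : (2 * π * m / n) ∈ Set.Ioo 0 π := by
    constructor
    · positivity
    · rw [div_lt_iff₀ hn]
      have : (2 * m : ℝ) < n := by exact_mod_cast h2mn
      nlinarith [Real.pi_pos]
  obtain ⟨ψ, hψmem, hψeq⟩ := hsurj hy
  refine ⟨ψ, ⟨hψmem, hψeq⟩, ?_⟩
  intro ψ' ⟨hψ'mem, hψ'eq⟩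
  exact hmono.injOn hψ'mem hψmem (hψ'eq.trans hψeq.symm)
end
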